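/- arXiv:1808.01783 — 6 statements merged into one kernel-verified Lean document; each statement's English description precedes it below -/
import Mathlib

section
/- For each f ∈ H, every t > 0 and all exponents α, β ≥ 1, the functional E_t^{α,β}(·;f) attains a minimizer on X. If moreover A is injective and α > 1, this minimizer is unique. -/
set_option maxHeartbeats 1000000


open Filter Topology Set
open scoped ENNReal RealInnerProductSpace

noncomputable section

/-- The variational energy `E_t^{α,β}(u; f)`. -/
def En {X : Type*} [NormedAddCommGroup X] [NormedSpace ℝ X]
    {H : Type*} [NormedAddCommGroup H] [InnerProductSpace ℝ H]
    (A : X →L[ℝ] H) (J : X → ℝ≥0∞) (f : H) (t α β : ℝ) (u : X) : ℝ≥0∞ :=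
  ENNReal.ofReal ((1 / α) * ‖A u - f‖ ^ α) + ENNReal.ofReal (t / β) * J u ^ β

/-- `u` is a minimizer of `E_t^{α,β}(·; f)`. -/
def IsMinimizer {X : Type*} [NormedAddCommGroup X] [NormedSpace ℝ X]
    {H : Type*} [NormedAddCommGroup H] [InnerProductSpace ℝ H]
    (A : X →L[ℝ] H) (J : X → ℝ≥0∞) (f : H) (t α β : ℝ) (u : X) : Prop :=
  ∀ v, En A J f t α β u ≤ En A J f t α β v

/-- `J` is proper. -/
def IsProperFn {X : Type*} (J : X → ℝ≥0∞) : Prop := ∃ u, J u ≠ ⊤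

/-- `J` is absolutely one-homogeneous. -/
def AbsOneHom {X : Type*} [NormedAddCommGroup X] [NormedSpace ℝ X] (J : X → ℝ≥0∞) : Prop :=
  ∀ (c : ℝ) (u : X), J (c • u) = ENNReal.ofReal |c| * J u

/-- `J` is convex. -/
def EConvexFn {X : Type*} [NormedAddCommGroup X] [NormedSpace ℝ X] (J : X → ℝ≥0∞) : Prop :=
  ∀ (u v : X) (a b : ℝ), 0 ≤ a → 0 ≤ b → a + b = 1 →
    J (a • u + b • v) ≤ ENNReal.ofReal a * J u + ENNReal.ofReal b * J v

/-- The subdifferential of `J` at `u`; dual elements are represented as `X →L[ℝ] ℝ`. -/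
def subdiff {X : Type*} [NormedAddCommGroup X] [NormedSpace ℝ X]
    (J : X → ℝ≥0∞) (u : X) : Set (X →L[ℝ] ℝ) :=
  {p | ∀ v, (J u : EReal) + ((p (v - u) : ℝ) : EReal) ≤ (J v : EReal)}

/-- The adjoint `A* q` as an element of the dual of `X`. -/
def Astar {X : Type*} [NormedAddCommGroup X] [NormedSpace ℝ X]
    {H : Type*} [NormedAddCommGroup H] [InnerProductSpace ℝ H]
    (A : X →L[ℝ] H) (q : H) : X →L[ℝ] ℝ :=
  (innerSL ℝ q).comp A

/-- The set of norms `‖q‖` of source elements `q` for solutions of `Au = f`. -/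
def SourceNorms {X : Type*} [NormedAddCommGroup X] [NormedSpace ℝ X]
    {H : Type*} [NormedAddCommGroup H] [InnerProductSpace ℝ H]
    (A : X →L[ℝ] H) (J : X → ℝ≥0∞) (f : H) : Set ℝ :=
  {r | ∃ (u : X) (q : H), J u ≠ ⊤ ∧ A u = f ∧ Astar A q ∈ subdiff J u ∧ r = ‖q‖}

/-- The weak-star topology on the dual `Y →L[ℝ] ℝ` of `Y`. -/
def weakStar (Y : Type*) [NormedAddCommGroup Y] [NormedSpace ℝ Y] :
    TopologicalSpace (Y →L[ℝ] ℝ) :=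
  TopologicalSpace.induced (fun (u : Y →L[ℝ] ℝ) (y : Y) => u y) inferInstance

/-- `J` is lower semicontinuous with respect to the weak-star topology. -/
def WeakStarLSC {Y : Type*} [NormedAddCommGroup Y] [NormedSpace ℝ Y]
    (J : (Y →L[ℝ] ℝ) → ℝ≥0∞) : Prop :=
  @LowerSemicontinuous _ _ (weakStar Y) _ J

/-- `A` is weak-star-to-weak continuous. -/
def WeakStarToWeakCont {Y : Type*} [NormedAddCommGroup Y] [NormedSpace ℝ Y]
    {H : Type*} [NormedAddCommGroup H] [InnerProductSpace ℝ H]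
    (A : (Y →L[ℝ] ℝ) →L[ℝ] H) : Prop :=
  ∀ h : H, @Continuous _ _ (weakStar Y) _ (fun u => (⟪A u, h⟫ : ℝ))

/-- Assumption 1: `‖A ·‖` is a norm on `N(J)` equivalent to the restriction of `‖·‖`. -/
def ANormEquiv {X : Type*} [NormedAddCommGroup X] [NormedSpace ℝ X]
    {H : Type*} [NormedAddCommGroup H] [InnerProductSpace ℝ H]
    (A : X →L[ℝ] H) (J : X → ℝ≥0∞) : Prop :=
  ∃ c > (0:ℝ), ∃ C > (0:ℝ), ∀ u, J u = 0 → c * ‖u‖ ≤ ‖A u‖ ∧ ‖A u‖ ≤ C * ‖u‖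

/-- `PA` is the `A`-orthogonal projection onto `N(J)`. -/
def IsAProj {X : Type*} [NormedAddCommGroup X] [NormedSpace ℝ X]
    {H : Type*} [NormedAddCommGroup H] [InnerProductSpace ℝ H]
    (A : X →L[ℝ] H) (J : X → ℝ≥0∞) (PA : H → X) : Prop :=
  ∀ g : H, J (PA g) = 0 ∧ (∀ u, J u = 0 → ‖A (PA g) - g‖ ≤ ‖A u - g‖) ∧
    (∀ u, J u = 0 → ‖A u - g‖ ≤ ‖A (PA g) - g‖ → u = PA g)

/-- Assumption 2: generalized Poincaré inequality. -/
def PoincareIneq {X : Type*} [NormedAddCommGroup X] [NormedSpace ℝ X]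
    {H : Type*} [NormedAddCommGroup H] [InnerProductSpace ℝ H]
    (A : X →L[ℝ] H) (J : X → ℝ≥0∞) (PA : H → X) : Prop :=
  ∃ C > (0:ℝ), ∀ u, ENNReal.ofReal ‖u - PA (A u)‖ ≤ ENNReal.ofReal C * J u


/-- A lower semicontinuous `ℝ≥0∞`-valued function attains its minimum on a nonempty
compact set. -/
theorem lsc_exists_min_aux {X : Type*} [TopologicalSpace X] {S : Set X} (hS : IsCompact S)
    (hne : S.Nonempty) {f : X → ℝ≥0∞} (hf : LowerSemicontinuous f) :
    ∃ x ∈ S, ∀ y ∈ S, f x ≤ f y := by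
  have : Nonempty X := ⟨hne.choose⟩
  set m := sInf (f '' S) with hm
  have key : ∃ x ∈ S, f x ≤ m := by
    by_cases hmt : m = ⊤
    · obtain ⟨x, hx⟩ := hne
      exact ⟨x, hx, by simp [hmt]⟩
    · have hι : Nonempty {c : ℝ≥0∞ // m < c} := ⟨⟨⊤, lt_top_iff_ne_top.2 hmt⟩⟩
      set T : {c : ℝ≥0∞ // m < c} → Set X := fun c => S ∩ f ⁻¹' Iic c.1 with hT
      have hTne : ∀ c, (T c).Nonempty := by
        rintro ⟨c, hc⟩
        obtain ⟨y, ⟨x, hx, rfl⟩, hyc⟩ := exists_lt_of_csInf_lt (hne.image f) hc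
        exact ⟨x, hx, le_of_lt hyc⟩
      set F : Filter X := ⨅ c, Filter.principal (T c) with hF
      have hdir : Directed (· ≥ ·) fun c : {c : ℝ≥0∞ // m < c} => Filter.principal (T c) := by
        rintro ⟨c, hc⟩ ⟨d, hd⟩
        refine ⟨⟨min c d, lt_min hc hd⟩, Filter.principal_mono.2 ?_,
          Filter.principal_mono.2 ?_⟩ <;>
          exact inter_subset_inter_right _ (preimage_mono (Iic_subset_Iic.2 (by simp)))
      have hFne : F.NeBot := Filter.iInf_neBot_of_directed hdir fun c =>
        Filter.principal_neBot_iff.2 (hTne c)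
      have hFS : F ≤ Filter.principal S := (iInf_le _ (Classical.arbitrary _)).trans
        (Filter.principal_mono.2 inter_subset_left)
      obtain ⟨x, hxS, hx⟩ := hS hFS
      refine ⟨x, hxS, ?_⟩
      have hle : ∀ c : {c : ℝ≥0∞ // m < c}, f x ≤ c.1 := by
        intro c
        have h1 : ClusterPt x (Filter.principal (T c)) := hx.mono (iInf_le _ c)
        have h2 : x ∈ closure (T c) := mem_closure_iff_clusterPt.2 h1
        have h3 : closure (T c) ⊆ f ⁻¹' Iic c.1 :=
          closure_minimal inter_subset_right (hf.isClosed_preimage c.1)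
        exact h3 h2
      by_contra hcon
      push_neg at hcon
      obtain ⟨c, hc1, hc2⟩ := exists_between hcon
      exact absurd (hle ⟨c, hc1⟩) (not_le.2 hc2)
  obtain ⟨x, hx, hxm⟩ := key
  exact ⟨x, hx, fun y hy => hxm.trans (sInf_le ⟨y, hy, rfl⟩)⟩

/-- `u ↦ ‖A u - f‖` is weak-star lower semicontinuous. -/
theorem norm_sub_lsc_aux {Y : Type*} [NormedAddCommGroup Y] [NormedSpace ℝ Y]
    {H : Type*} [NormedAddCommGroup H] [InnerProductSpace ℝ H]
    (A : (Y →L[ℝ] ℝ) →L[ℝ] H) (hA3 : WeakStarToWeakCont A)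
    (f : H) : @LowerSemicontinuous _ _ (weakStar Y) _ (fun u => ‖A u - f‖) := by
  letI := weakStar Y
  intro u c hc
  rcases lt_or_ge c 0 with h0 | h0
  · exact Filter.Eventually.of_forall fun v => lt_of_lt_of_le h0 (norm_nonneg _)
  · set g := A u - f with hg
    have hc' : c < ‖g‖ := hc
    have hgne : g ≠ 0 := norm_pos_iff.1 (h0.trans_lt hc')
    set h := ‖g‖⁻¹ • g with hh
    have hnh : ‖h‖ = 1 := by
      rw [hh, norm_smul, norm_inv, norm_norm, inv_mul_cancel₀ (norm_ne_zero_iff.2 hgne)]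
    have hφ : Continuous (fun v => (⟪A v, h⟫ : ℝ) - ⟪f, h⟫) := (hA3 h).sub continuous_const
    have hφu : c < ⟪A u, h⟫ - ⟪f, h⟫ := by
      have : (⟪A u, h⟫ : ℝ) - ⟪f, h⟫ = ⟪g, h⟫ := by rw [hg, inner_sub_left]
      rw [this, hh, real_inner_smul_right, real_inner_self_eq_norm_sq]
      rw [sq, ← mul_assoc, inv_mul_cancel₀ (norm_ne_zero_iff.2 hgne), one_mul]
      exact hc'
    have hev : ∀ᶠ v in nhds u, c < ⟪A v, h⟫ - ⟪f, h⟫ :=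
      (hφ.continuousAt (x := u)).eventually_const_lt hφu
    refine hev.mono fun v hv => lt_of_lt_of_le hv ?_
    calc (⟪A v, h⟫ : ℝ) - ⟪f, h⟫ = ⟪A v - f, h⟫ := by rw [inner_sub_left]
      _ ≤ ‖A v - f‖ * ‖h‖ := real_inner_le_norm _ _
      _ = ‖A v - f‖ := by rw [hnh, mul_one]

/-- The energy is weak-star lower semicontinuous. -/
theorem En_lsc_aux {Y : Type*} [NormedAddCommGroup Y] [NormedSpace ℝ Y]
    {H : Type*} [NormedAddCommGroup H] [InnerProductSpace ℝ H]
    (A : (Y →L[ℝ] ℝ) →L[ℝ] H) (J : (Y →L[ℝ] ℝ) → ℝ≥0∞) (f : H)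
    (hA3 : WeakStarToWeakCont A) (hlsc : WeakStarLSC J)
    (t α β : ℝ) (hα : 1 ≤ α) (hβ : 1 ≤ β) :
    @LowerSemicontinuous _ _ (weakStar Y) _ (En A J f t α β) := by
  letI := weakStar Y
  have hα0 : (0:ℝ) ≤ α := le_trans zero_le_one hα
  have h1 : LowerSemicontinuous (fun u => ENNReal.ofReal ((1 / α) * ‖A u - f‖ ^ α)) := by
    have heq : (fun u => ENNReal.ofReal ((1 / α) * ‖A u - f‖ ^ α)) =
        (fun y : ℝ≥0∞ => ENNReal.ofReal (1 / α) * y ^ α) ∘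
          (fun u => ENNReal.ofReal ‖A u - f‖) := by
      funext u
      simp only [Function.comp_apply]
      rw [ENNReal.ofReal_mul (by positivity), ENNReal.ofReal_rpow_of_nonneg (norm_nonneg _) hα0]
    rw [heq]
    refine Continuous.comp_lowerSemicontinuous
      ((ENNReal.continuous_const_mul ENNReal.ofReal_ne_top).comp ENNReal.continuous_rpow_const)
      (Continuous.comp_lowerSemicontinuous (g := ENNReal.ofReal)
        ENNReal.continuous_ofReal (norm_sub_lsc_aux A hA3 f)
        (fun a b hab => ENNReal.ofReal_le_ofReal hab))
      (fun a b hab => mul_le_mul_right (ENNReal.rpow_le_rpow hab hα0) _)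
  have h2 : LowerSemicontinuous (fun u => ENNReal.ofReal (t / β) * J u ^ β) := by
    refine Continuous.comp_lowerSemicontinuous (g := fun y : ℝ≥0∞ => ENNReal.ofReal (t/β) * y ^ β)
      ((ENNReal.continuous_const_mul ENNReal.ofReal_ne_top).comp ENNReal.continuous_rpow_const)
      hlsc (fun a b hab => mul_le_mul_right (ENNReal.rpow_le_rpow hab (by positivity)) _)
  exact h1.add h2

/-- Existence of minimizers, Theorem 2.1.
For each `f ∈ H`, every `t > 0` and all exponents `α, β ≥ 1`, the functional
`E_t^{α,β}(·;f)` attains a minimizer on `X` (the dual of the separable space `Y`).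
If moreover `A` is injective and `α > 1`, this minimizer is unique. -/
theorem existence_and_uniqueness_of_minimizers
    {Y : Type*} [NormedAddCommGroup Y] [NormedSpace ℝ Y] [TopologicalSpace.SeparableSpace Y]
    {H : Type*} [NormedAddCommGroup H] [InnerProductSpace ℝ H]
    (A : (Y →L[ℝ] ℝ) →L[ℝ] H) (J : (Y →L[ℝ] ℝ) → ℝ≥0∞) (f : H) (PA : H → (Y →L[ℝ] ℝ))
    (hproper : IsProperFn J) (hconv : EConvexFn J) (hlsc : WeakStarLSC J) (hhom : AbsOneHom J)
    (hdata : ∀ w, A w = f → J w ≠ 0)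
    (hA1 : ANormEquiv A J) (hPA : IsAProj A J PA) (hA2 : PoincareIneq A J PA)
    (hA3 : WeakStarToWeakCont A)
    (t α β : ℝ) (ht : 0 < t) (hα : 1 ≤ α) (hβ : 1 ≤ β) :
    (∃ u, IsMinimizer A J f t α β u) ∧
      (Function.Injective A → 1 < α → ∃! u, IsMinimizer A J f t α β u) := by
  obtain ⟨cl, hcl, Cu, hCu, hA1'⟩ := hA1
  obtain ⟨Cp, hCp, hPoin⟩ := hA2
  have hα0 : (0:ℝ) < α := lt_of_lt_of_le one_pos hα
  have hβ0 : (0:ℝ) < β := lt_of_lt_of_le one_pos hβ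
  -- J 0 = 0
  have hJ0 : J 0 = 0 := by
    obtain ⟨v, hv⟩ := hproper
    have := hhom 0 v
    rw [zero_smul] at this
    rw [this]
    simp
  -- the base point
  set u₀ : Y →L[ℝ] ℝ := PA f with hu₀
  have hJu₀ : J u₀ = 0 := (hPA f).1
  set c₀ : ℝ := (1/α) * ‖A u₀ - f‖ ^ α with hc₀def
  have hc₀ : 0 ≤ c₀ := by positivity
  have hEu₀ : En A J f t α β u₀ = ENNReal.ofReal c₀ := by
    unfold En
    rw [hJu₀, ENNReal.zero_rpow_of_pos hβ0, mul_zero, add_zero]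
  -- coercivity
  set R₁ : ℝ := (α * c₀) ^ α⁻¹ with hR₁def
  set R₂ : ℝ := (β / t * c₀) ^ β⁻¹ with hR₂def
  have hR₂0 : 0 ≤ R₂ := Real.rpow_nonneg (by positivity) _
  set R : ℝ := Cp * R₂ + 2 * (R₁ + ‖f‖) / cl with hRdef
  have hcoer : ∀ u, En A J f t α β u ≤ ENNReal.ofReal c₀ → ‖u‖ ≤ R := by
    intro u hu
    unfold En at hu
    have h1 : ENNReal.ofReal ((1/α) * ‖A u - f‖ ^ α) ≤ ENNReal.ofReal c₀ :=
      le_trans le_self_add hu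
    have h1' : (1/α) * ‖A u - f‖ ^ α ≤ c₀ := by
      by_contra hcon
      push_neg at hcon
      exact absurd h1 (not_le.2 (ENNReal.ofReal_lt_ofReal_iff_of_nonneg hc₀ |>.2 hcon))
    have hxα : ‖A u - f‖ ^ α ≤ α * c₀ := by
      have h2 := mul_le_mul_of_nonneg_left h1' hα0.le
      calc ‖A u - f‖ ^ α = α * ((1/α) * ‖A u - f‖ ^ α) := by
            field_simp
        _ ≤ α * c₀ := h2
    have hnorm1 : ‖A u - f‖ ≤ R₁ := by
      calc ‖A u - f‖ = (‖A u - f‖ ^ α) ^ α⁻¹ :=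
            (Real.rpow_rpow_inv (norm_nonneg _) hα0.ne').symm
        _ ≤ (α * c₀) ^ α⁻¹ :=
            Real.rpow_le_rpow (Real.rpow_nonneg (norm_nonneg _) _) hxα (inv_nonneg.2 hα0.le)
    have h2 : ENNReal.ofReal (t/β) * J u ^ β ≤ ENNReal.ofReal c₀ := le_trans le_add_self hu
    have hJu : J u ≤ ENNReal.ofReal R₂ := by
      have hconst : ENNReal.ofReal (β/t) * ENNReal.ofReal (t/β) = 1 := by
        rw [← ENNReal.ofReal_mul (by positivity)]
        rw [show β/t * (t/β) = 1 by field_simp]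
        exact ENNReal.ofReal_one
      have hpow : J u ^ β ≤ ENNReal.ofReal (β/t * c₀) := by
        calc J u ^ β = ENNReal.ofReal (β/t) * ENNReal.ofReal (t/β) * J u ^ β := by
              rw [hconst, one_mul]
          _ = ENNReal.ofReal (β/t) * (ENNReal.ofReal (t/β) * J u ^ β) := by rw [mul_assoc]
          _ ≤ ENNReal.ofReal (β/t) * ENNReal.ofReal c₀ := mul_le_mul_right h2 _
          _ = ENNReal.ofReal (β/t * c₀) := (ENNReal.ofReal_mul (by positivity)).symm
      calc J u = (J u ^ β) ^ β⁻¹ := (ENNReal.rpow_rpow_inv hβ0.ne' _).symm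
        _ ≤ (ENNReal.ofReal (β/t * c₀)) ^ β⁻¹ := ENNReal.rpow_le_rpow hpow (inv_nonneg.2 hβ0.le)
        _ = ENNReal.ofReal R₂ := by
            rw [← ENNReal.ofReal_rpow_of_nonneg (by positivity) (inv_nonneg.2 hβ0.le)]
    have hdist : ‖u - PA (A u)‖ ≤ Cp * R₂ := by
      have hP := hPoin u
      have hP2 : ENNReal.ofReal ‖u - PA (A u)‖ ≤ ENNReal.ofReal (Cp * R₂) := by
        calc ENNReal.ofReal ‖u - PA (A u)‖ ≤ ENNReal.ofReal Cp * J u := hP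
          _ ≤ ENNReal.ofReal Cp * ENNReal.ofReal R₂ := mul_le_mul_right hJu _
          _ = ENNReal.ofReal (Cp * R₂) := (ENNReal.ofReal_mul hCp.le).symm
      exact (ENNReal.ofReal_le_ofReal_iff (by positivity)).1 hP2
    set p : Y →L[ℝ] ℝ := PA (A u) with hp
    have hJp : J p = 0 := (hPA (A u)).1
    have hAp : ‖A p - A u‖ ≤ ‖A u‖ := by
      have h := (hPA (A u)).2.1 0 hJ0
      rwa [map_zero, zero_sub, norm_neg] at h
    have hApn : ‖A p‖ ≤ 2 * ‖A u‖ := by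
      have h := norm_add_le (A p - A u) (A u)
      rw [sub_add_cancel] at h
      linarith
    have hAu : ‖A u‖ ≤ R₁ + ‖f‖ := by
      have h := norm_add_le (A u - f) f
      rw [sub_add_cancel] at h
      linarith
    have hpn : ‖p‖ ≤ 2 * (R₁ + ‖f‖) / cl := by
      have h := (hA1' p hJp).1
      rw [le_div_iff₀ hcl]
      nlinarith
    have h := norm_add_le (u - p) p
    rw [sub_add_cancel] at h
    calc ‖u‖ ≤ ‖u - p‖ + ‖p‖ := h
      _ ≤ Cp * R₂ + 2 * (R₁ + ‖f‖) / cl := add_le_add hdist hpn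
  -- compactness and existence of a minimizer
  have hcomp : @IsCompact (Y →L[ℝ] ℝ) (weakStar Y) (Metric.closedBall 0 R) :=
    WeakDual.isCompact_closedBall (𝕜 := ℝ) (E := Y) 0 R
  have hu₀S : u₀ ∈ Metric.closedBall (0 : Y →L[ℝ] ℝ) R := by
    rw [mem_closedBall_zero_iff]
    exact hcoer u₀ (le_of_eq hEu₀)
  obtain ⟨us, husS, hmin⟩ := @lsc_exists_min_aux _ (weakStar Y) _ hcomp ⟨u₀, hu₀S⟩ _
    (En_lsc_aux A J f hA3 hlsc t α β hα hβ)
  have hglobal : IsMinimizer A J f t α β us := by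
    intro v
    by_contra hlt
    push_neg at hlt
    have hvM : En A J f t α β v ≤ ENNReal.ofReal c₀ :=
      le_of_lt (lt_of_lt_of_le hlt ((hmin u₀ hu₀S).trans_eq hEu₀))
    have hvS : v ∈ Metric.closedBall (0 : Y →L[ℝ] ℝ) R := by
      rw [mem_closedBall_zero_iff]
      exact hcoer v hvM
    exact absurd (hmin v hvS) (not_le.2 hlt)
  refine ⟨⟨us, hglobal⟩, fun hInj hα1 => ⟨us, hglobal, fun u₂ h₂ => ?_⟩⟩
  -- uniqueness
  by_contra hne
  set m : ℝ≥0∞ := En A J f t α β us with hmdef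
  have hmne : m ≠ ⊤ := by
    have h := (hglobal u₀).trans_eq hEu₀
    exact ne_top_of_le_ne_top ENNReal.ofReal_ne_top h
  have hEu₂ : En A J f t α β u₂ = m := le_antisymm (h₂ us) (hglobal u₂)
  set a : H := A u₂ - f with hadef
  set b : H := A us - f with hbdef
  have habne : a ≠ b := by
    intro h
    apply hne
    apply hInj
    have := sub_left_injective h
    exact this
  set w : (Y →L[ℝ] ℝ) := (1/2 : ℝ) • u₂ + (1/2 : ℝ) • us with hwdef
  have hAw : A w - f = (1/2 : ℝ) • (a + b) := by
    rw [hwdef, map_add, map_smul, map_smul, hadef, hbdef]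
    have hf2 : (1/2 : ℝ) • f + (1/2 : ℝ) • f = f := by
      rw [← add_smul]; norm_num
    rw [smul_add, smul_sub, smul_sub]
    nth_rewrite 1 [← hf2]
    abel
  -- strict convexity of the fidelity term
  have hreal : ‖(1/2 : ℝ) • (a + b)‖ ^ α < (1/2) * ‖a‖ ^ α + (1/2) * ‖b‖ ^ α := by
    by_cases hab : ‖a‖ = ‖b‖
    · have ha0 : a ≠ 0 := by
        intro h
        have hb : b = 0 := norm_eq_zero.1 (by rw [← hab, h, norm_zero])
        exact habne (by rw [h, hb])
      have hmid : ‖(1/2 : ℝ) • (a + b)‖ < ‖a‖ := (norm_midpoint_lt_iff hab).2 habne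
      calc ‖(1/2 : ℝ) • (a + b)‖ ^ α < ‖a‖ ^ α :=
            Real.rpow_lt_rpow (norm_nonneg _) hmid hα0
        _ = (1/2) * ‖a‖ ^ α + (1/2) * ‖b‖ ^ α := by rw [hab]; ring
    · have h1 : ‖(1/2 : ℝ) • (a + b)‖ ≤ (1/2) * ‖a‖ + (1/2) * ‖b‖ := by
        rw [norm_smul]
        have h := norm_add_le a b
        have : ‖(1/2 : ℝ)‖ = 1/2 := by rw [Real.norm_eq_abs]; norm_num
        rw [this]
        nlinarith
      have h2 : ((1/2) * ‖a‖ + (1/2) * ‖b‖) ^ α < (1/2) * ‖a‖ ^ α + (1/2) * ‖b‖ ^ α := by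
        have h := (strictConvexOn_rpow hα1).2 (mem_Ici.2 (norm_nonneg a))
          (mem_Ici.2 (norm_nonneg b)) hab (by norm_num : (0:ℝ) < 1/2)
          (by norm_num : (0:ℝ) < 1/2) (by norm_num)
        simpa [smul_eq_mul] using h
      calc ‖(1/2 : ℝ) • (a + b)‖ ^ α ≤ ((1/2) * ‖a‖ + (1/2) * ‖b‖) ^ α :=
            Real.rpow_le_rpow (norm_nonneg _) h1 hα0.le
        _ < _ := h2
  -- the two terms of the energy
  set T1 : (Y →L[ℝ] ℝ) → ℝ≥0∞ := fun v => ENNReal.ofReal ((1/α) * ‖A v - f‖ ^ α) with hT1def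
  set T2 : (Y →L[ℝ] ℝ) → ℝ≥0∞ := fun v => ENNReal.ofReal (t/β) * J v ^ β with hT2def
  have hEnsplit : ∀ v, En A J f t α β v = T1 v + T2 v := fun v => rfl
  have hhalf : ENNReal.ofReal (1/2) + ENNReal.ofReal (1/2) = 1 := by
    rw [← ENNReal.ofReal_add (by norm_num) (by norm_num)]
    norm_num
  have hT1 : T1 w < ENNReal.ofReal (1/2) * T1 u₂ + ENNReal.ofReal (1/2) * T1 us := by
    have hr : (1/α) * ‖A w - f‖ ^ α <
        (1/2) * ((1/α) * ‖a‖ ^ α) + (1/2) * ((1/α) * ‖b‖ ^ α) := by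
      rw [hAw]
      calc (1/α) * ‖(1/2 : ℝ) • (a + b)‖ ^ α
          < (1/α) * ((1/2) * ‖a‖ ^ α + (1/2) * ‖b‖ ^ α) :=
            mul_lt_mul_of_pos_left hreal (one_div_pos.2 hα0)
        _ = (1/2) * ((1/α) * ‖a‖ ^ α) + (1/2) * ((1/α) * ‖b‖ ^ α) := by ring
    have hX1 : (0:ℝ) ≤ (1/α) * ‖a‖ ^ α :=
      mul_nonneg (one_div_nonneg.2 hα0.le) (Real.rpow_nonneg (norm_nonneg _) _)
    have hX2 : (0:ℝ) ≤ (1/α) * ‖b‖ ^ α :=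
      mul_nonneg (one_div_nonneg.2 hα0.le) (Real.rpow_nonneg (norm_nonneg _) _)
    have hXw : (0:ℝ) ≤ (1/α) * ‖A w - f‖ ^ α :=
      mul_nonneg (one_div_nonneg.2 hα0.le) (Real.rpow_nonneg (norm_nonneg _) _)
    calc T1 w < ENNReal.ofReal ((1/2) * ((1/α) * ‖a‖ ^ α) + (1/2) * ((1/α) * ‖b‖ ^ α)) :=
          (ENNReal.ofReal_lt_ofReal_iff_of_nonneg hXw).2 hr
      _ = ENNReal.ofReal (1/2) * T1 u₂ + ENNReal.ofReal (1/2) * T1 us := by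
          rw [ENNReal.ofReal_add (mul_nonneg (by norm_num) hX1) (mul_nonneg (by norm_num) hX2),
            ENNReal.ofReal_mul (show (0:ℝ) ≤ 1/2 by norm_num),
            ENNReal.ofReal_mul (show (0:ℝ) ≤ 1/2 by norm_num)]
  have hT2 : T2 w ≤ ENNReal.ofReal (1/2) * T2 u₂ + ENNReal.ofReal (1/2) * T2 us := by
    have hJw : J w ≤ ENNReal.ofReal (1/2) * J u₂ + ENNReal.ofReal (1/2) * J us :=
      hconv u₂ us (1/2) (1/2) (by norm_num) (by norm_num) (by norm_num)
    have hpow : J w ^ β ≤ ENNReal.ofReal (1/2) * J u₂ ^ β + ENNReal.ofReal (1/2) * J us ^ β :=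
      (ENNReal.rpow_le_rpow hJw hβ0.le).trans
        (ENNReal.rpow_arith_mean_le_arith_mean2_rpow _ _ _ _ hhalf hβ)
    calc T2 w ≤ ENNReal.ofReal (t/β) *
          (ENNReal.ofReal (1/2) * J u₂ ^ β + ENNReal.ofReal (1/2) * J us ^ β) :=
          mul_le_mul_right hpow _
      _ = ENNReal.ofReal (1/2) * T2 u₂ + ENNReal.ofReal (1/2) * T2 us := by
          rw [mul_add, mul_left_comm, mul_left_comm (ENNReal.ofReal (t/β))]
  have hT2ne : T2 w ≠ ⊤ := by
    refine ne_top_of_le_ne_top ?_ hT2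
    have h2 : T2 u₂ ≤ m := by rw [← hEu₂, hEnsplit]; exact le_add_self
    have h3 : T2 us ≤ m := by rw [hmdef, hEnsplit]; exact le_add_self
    exact ENNReal.add_ne_top.2 ⟨ENNReal.mul_ne_top ENNReal.ofReal_ne_top
      (ne_top_of_le_ne_top hmne h2), ENNReal.mul_ne_top ENNReal.ofReal_ne_top
      (ne_top_of_le_ne_top hmne h3)⟩
  have hfinal : En A J f t α β w < m := by
    calc En A J f t α β w = T1 w + T2 w := hEnsplit w
      _ < (ENNReal.ofReal (1/2) * T1 u₂ + ENNReal.ofReal (1/2) * T1 us) +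
          (ENNReal.ofReal (1/2) * T2 u₂ + ENNReal.ofReal (1/2) * T2 us) :=
          ENNReal.add_lt_add_of_lt_of_le hT2ne hT1 hT2
      _ = ENNReal.ofReal (1/2) * (T1 u₂ + T2 u₂) + ENNReal.ofReal (1/2) * (T1 us + T2 us) := by
          rw [mul_add, mul_add]; ring
      _ = ENNReal.ofReal (1/2) * m + ENNReal.ofReal (1/2) * m := by
          rw [← hEnsplit, ← hEnsplit, hEu₂, ← hmdef]
      _ = m := by rw [← add_mul, hhalf, one_mul]
  exact absurd (hglobal w) (not_le.2 hfinal)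

end
end

section
/- Suppose the range condition and the source condition hold, let β ≥ 1, and set t_* := J_min^{1−β}/s*. Then every minimizer u_t of E_t^{1,β}(·;f) for 0 < t < t_* satisfies Au_t = f. -/
open Filter Topology Set
open scoped ENNReal RealInnerProductSpace

noncomputable section

/-- Theorem 2.10.
Suppose the range and source conditions hold, let `β ≥ 1`, and set
`t_* := J_min^{1−β}/s_*`. Then every minimizer `u_t` of `E_t^{1,β}(·;f)` for
`0 < t < t_*` satisfies `Au_t = f`. -/
theorem minimizers_solve_before_tstar
    {Y : Type*} [NormedAddCommGroup Y] [NormedSpace ℝ Y]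
    {H : Type*} [NormedAddCommGroup H] [InnerProductSpace ℝ H]
    (A : (Y →L[ℝ] ℝ) →L[ℝ] H) (J : (Y →L[ℝ] ℝ) → ℝ≥0∞) (f : H)
    (hproper : IsProperFn J) (hconv : EConvexFn J) (hlsc : WeakStarLSC J) (hhom : AbsOneHom J)
    (hdata : ∀ w, A w = f → J w ≠ 0)
    (hRCSC : (SourceNorms A J f).Nonempty)
    (β : ℝ) (hβ : 1 ≤ β)
    (Jmin : ℝ) (hJminpos : 0 < Jmin)
    (hJmin : ∀ (u : Y →L[ℝ] ℝ) (q : H), J u ≠ ⊤ → A u = f → Astar A q ∈ subdiff J u →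
      J u = ENNReal.ofReal Jmin) :
    ∀ t : ℝ, 0 < t → t < Jmin ^ ((1:ℝ) - β) / sInf (SourceNorms A J f) →
      ∀ u, IsMinimizer A J f t 1 β u → A u = f := by
  intro t ht htlt u hmin
  have hβpos : (0:ℝ) < β := lt_of_lt_of_le one_pos hβ
  have hS0 : ∀ r ∈ SourceNorms A J f, (0:ℝ) ≤ r := by
    rintro r ⟨u', q', -, -, -, rfl⟩; exact norm_nonneg _
  have hsinf_nonneg : 0 ≤ sInf (SourceNorms A J f) := le_csInf hRCSC hS0
  have hsinf_pos : 0 < sInf (SourceNorms A J f) := by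
    rcases hsinf_nonneg.lt_or_eq with h | h
    · exact h
    · exfalso; rw [← h, div_zero] at htlt; linarith
  have h1 : sInf (SourceNorms A J f) < Jmin ^ ((1:ℝ) - β) / t := by
    rw [lt_div_iff₀ hsinf_pos] at htlt
    rw [lt_div_iff₀ ht]
    nlinarith
  obtain ⟨r, hrS, hrlt⟩ := exists_lt_of_csInf_lt hRCSC h1
  obtain ⟨udag, q, hJtop, hAudag, hsubq, rfl⟩ := hrS
  have hJudag : J udag = ENNReal.ofReal Jmin := hJmin udag q hJtop hAudag hsubq
  set J1 : ℝ := Jmin ^ (β - 1) with hJ1def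
  have hJ1pos : 0 < J1 := Real.rpow_pos_of_pos hJminpos _
  have h4 : t * ‖q‖ * J1 < 1 := by
    have hrw : Jmin ^ ((1:ℝ) - β) = J1⁻¹ := by
      rw [hJ1def, ← Real.rpow_neg hJminpos.le]; ring_nf
    rw [hrw] at hrlt
    have h5 : ‖q‖ * t < J1⁻¹ := (lt_div_iff₀ ht).mp hrlt
    have := mul_lt_mul_of_pos_right h5 hJ1pos
    rw [inv_mul_cancel₀ (ne_of_gt hJ1pos)] at this
    nlinarith
  have htβ : 0 < t / β := div_pos ht hβpos
  -- energy at udag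
  have hEdag : En A J f t 1 β udag = ENNReal.ofReal ((t / β) * Jmin ^ β) := by
    unfold En
    rw [hAudag, sub_self, norm_zero, Real.zero_rpow one_ne_zero, mul_zero,
      ENNReal.ofReal_zero, zero_add, hJudag, ENNReal.ofReal_rpow_of_nonneg hJminpos.le hβpos.le,
      ← ENNReal.ofReal_mul htβ.le]
  have hEn : En A J f t 1 β u ≤ ENNReal.ofReal ((t / β) * Jmin ^ β) := by
    rw [← hEdag]; exact hmin udag
  have hJufin : J u ≠ ⊤ := by
    intro h
    rw [En, h, ENNReal.top_rpow_of_pos hβpos, ENNReal.mul_top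
      (by simp [ENNReal.ofReal_eq_zero]; linarith)] at hEn
    simp at hEn
  set a : ℝ := (J u).toReal with hadef
  have ha0 : 0 ≤ a := ENNReal.toReal_nonneg
  have hJa : J u = ENNReal.ofReal a := (ENNReal.ofReal_toReal hJufin).symm
  have key : ‖A u - f‖ + (t / β) * a ^ β ≤ (t / β) * Jmin ^ β := by
    have h6 : ENNReal.ofReal (‖A u - f‖ + (t / β) * a ^ β)
        ≤ ENNReal.ofReal ((t / β) * Jmin ^ β) := by
      rw [ENNReal.ofReal_add (norm_nonneg _) (by positivity)]
      have h7 : En A J f t 1 β u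
          = ENNReal.ofReal ‖A u - f‖ + ENNReal.ofReal ((t / β) * a ^ β) := by
        unfold En
        rw [hJa, ENNReal.ofReal_rpow_of_nonneg ha0 hβpos.le, ← ENNReal.ofReal_mul htβ.le]
        norm_num
      rw [← h7]; exact hEn
    exact (ENNReal.ofReal_le_ofReal_iff (by positivity)).mp h6
  -- subdifferential inequality
  have hc : (Astar A q) (u - udag) = ⟪q, A u - f⟫ := by
    rw [Astar, ContinuousLinearMap.comp_apply, innerSL_apply_apply, map_sub, hAudag]
  have hsub' := hsubq u
  rw [hJudag, hJa, hc] at hsub'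
  rw [EReal.coe_ennreal_ofReal, EReal.coe_ennreal_ofReal, max_eq_left hJminpos.le,
    max_eq_left ha0, ← EReal.coe_add, EReal.coe_le_coe_iff] at hsub'
  have h3 : Jmin - a ≤ ‖q‖ * ‖A u - f‖ := by
    have hCS := real_inner_le_norm q (f - A u)
    have hswap : ⟪q, f - A u⟫ = -⟪q, A u - f⟫ := by
      rw [show f - A u = -(A u - f) from (neg_sub (A u) f).symm, inner_neg_right]
    rw [hswap, norm_sub_rev] at hCS
    linarith
  -- Bernoulli
  have hbern : Jmin ^ β - a ^ β ≤ β * J1 * (Jmin - a) := by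
    have hB := one_add_mul_self_le_rpow_one_add (s := a / Jmin - 1)
      (by have : 0 ≤ a / Jmin := div_nonneg ha0 hJminpos.le; linarith) hβ
    rw [show (1:ℝ) + (a / Jmin - 1) = a / Jmin by ring,
      Real.div_rpow ha0 hJminpos.le] at hB
    have hP : (0:ℝ) < Jmin ^ β := Real.rpow_pos_of_pos hJminpos _
    have hJ1eq : J1 * Jmin = Jmin ^ β := by
      rw [hJ1def, ← Real.rpow_add_one (ne_of_gt hJminpos)]
      congr 1
      ring
    have hB2 := mul_le_mul_of_nonneg_right hB hP.le
    rw [div_mul_cancel₀ _ (ne_of_gt hP)] at hB2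
    have heq : (1 + β * (a / Jmin - 1)) * Jmin ^ β
        = Jmin ^ β + β * (a * J1) - β * Jmin ^ β := by
      rw [← hJ1eq]
      field_simp
      ring
    rw [heq] at hB2
    have hJ1eqβ : β * (J1 * Jmin) = β * Jmin ^ β := by rw [hJ1eq]
    linarith
  -- conclude
  by_contra hne
  have hN : 0 < ‖A u - f‖ := by
    rw [norm_pos_iff]; intro h; exact hne (sub_eq_zero.mp h)
  have hq0 : (0:ℝ) ≤ ‖q‖ := norm_nonneg q
  have hchain : ‖A u - f‖ ≤ t * J1 * (Jmin - a) := by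
    have h8 : (t / β) * (Jmin ^ β - a ^ β) ≤ (t / β) * (β * J1 * (Jmin - a)) :=
      mul_le_mul_of_nonneg_left hbern htβ.le
    have h9 : (t / β) * (β * J1 * (Jmin - a)) = t * J1 * (Jmin - a) := by
      field_simp
    linarith
  have h10 : t * J1 * (Jmin - a) ≤ t * J1 * (‖q‖ * ‖A u - f‖) :=
    mul_le_mul_of_nonneg_left h3 (by positivity)
  nlinarith [mul_lt_mul_of_pos_right h4 hN]

end
end

section
/- Let (t_k) ⊂ (0,∞) be a sequence tending to infinity and for each k let u_{t_k} be a minimizer of E_{t_k}^{α,β}(·;f). Then (u_{t_k}) converges in the weak* topology of X to u_∞ := P^A(f) as k → ∞. -/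
open Filter Topology Set
open scoped ENNReal RealInnerProductSpace

noncomputable section

/-- Sequential Banach–Alaoglu: a norm-bounded sequence in the dual of a separable
normed space has a subsequence converging pointwise to a continuous linear functional. -/
lemma seq_banach_alaoglu {Y : Type*} [NormedAddCommGroup Y] [NormedSpace ℝ Y]
    [TopologicalSpace.SeparableSpace Y]
    (v : ℕ → (Y →L[ℝ] ℝ)) (R : ℝ) (hv : ∀ k, ‖v k‖ ≤ R) :
    ∃ (w : Y →L[ℝ] ℝ) (φ : ℕ → ℕ), StrictMono φ ∧
      ∀ y, Tendsto (fun j => v (φ j) y) atTop (𝓝 (w y)) := by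
  have : Nonempty Y := ⟨0⟩
  have hR0 : (0:ℝ) ≤ R := le_trans (norm_nonneg _) (hv 0)
  set D : ℕ → Y := TopologicalSpace.denseSeq Y with hDdef
  have hD : DenseRange D := TopologicalSpace.denseRange_denseSeq Y
  set S : Set (ℕ → ℝ) := Set.univ.pi (fun n => Icc (-(R * ‖D n‖)) (R * ‖D n‖)) with hSdef
  have hScompact : IsCompact S := isCompact_univ_pi fun n => isCompact_Icc
  have hS : IsSeqCompact S := hScompact.isSeqCompact
  have hmem : ∀ k, (fun n => v k (D n)) ∈ S := by
    intro k
    rw [hSdef, Set.mem_univ_pi]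
    intro n
    have h1 : |v k (D n)| ≤ R * ‖D n‖ := by
      calc |v k (D n)| = ‖v k (D n)‖ := rfl
        _ ≤ ‖v k‖ * ‖D n‖ := (v k).le_opNorm _
        _ ≤ R * ‖D n‖ := mul_le_mul_of_nonneg_right (hv k) (norm_nonneg _)
    exact ⟨neg_le_of_abs_le h1, le_of_abs_le h1⟩
  obtain ⟨g, -, φ, hφ, hg⟩ := hS hmem
  have hgp : ∀ n, Tendsto (fun j => v (φ j) (D n)) atTop (𝓝 (g n)) := by
    intro n
    exact (tendsto_pi_nhds.1 hg n)
  have hcauchy : ∀ y : Y, ∃ L, Tendsto (fun j => v (φ j) y) atTop (𝓝 L) := by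
    intro y
    refine cauchySeq_tendsto_of_complete ?_
    rw [Metric.cauchySeq_iff]
    intro ε hε
    have hpos : 0 < ε / (4 * (R + 1)) := by positivity
    obtain ⟨n, hn⟩ := hD.exists_dist_lt y hpos
    obtain ⟨N, hN⟩ := Metric.cauchySeq_iff.1 (hgp n).cauchySeq (ε/2) (by positivity)
    refine ⟨N, fun a ha b hb => ?_⟩
    have key : ∀ j, |v (φ j) y - v (φ j) (D n)| ≤ ε/4 := by
      intro j
      have h1 : |v (φ j) y - v (φ j) (D n)| = ‖v (φ j) (y - D n)‖ := by
        rw [map_sub]; rfl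
      rw [h1]
      calc ‖v (φ j) (y - D n)‖ ≤ ‖v (φ j)‖ * ‖y - D n‖ := (v (φ j)).le_opNorm _
        _ ≤ R * (ε / (4 * (R + 1))) := by
            apply mul_le_mul (hv _) _ (norm_nonneg _) hR0
            rw [← dist_eq_norm]; exact le_of_lt hn
        _ ≤ (R + 1) * (ε / (4 * (R + 1))) := by
            apply mul_le_mul_of_nonneg_right (by linarith) (le_of_lt hpos)
        _ = ε/4 := by field_simp
    have hd := hN a ha b hb
    rw [Real.dist_eq] at hd ⊢
    calc |v (φ a) y - v (φ b) y|
        ≤ |v (φ a) y - v (φ a) (D n)| + |v (φ a) (D n) - v (φ b) y| :=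
          abs_sub_le _ _ _
      _ ≤ |v (φ a) y - v (φ a) (D n)| + (|v (φ a) (D n) - v (φ b) (D n)|
            + |v (φ b) (D n) - v (φ b) y|) := by
          have := abs_sub_le (v (φ a) (D n)) (v (φ b) (D n)) (v (φ b) y)
          linarith
      _ < ε/4 + ε/2 + ε/4 := by
          have h2 : |v (φ b) (D n) - v (φ b) y| ≤ ε/4 := by
            rw [abs_sub_comm]; exact key b
          have h3 := key a
          linarith [hd]
      _ = ε := by ring
  choose L hL using hcauchy
  have hbdd : Bornology.IsBounded (Set.range fun j => v (φ j)) := by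
    rw [isBounded_iff_forall_norm_le]
    exact ⟨R, by rintro x ⟨j, rfl⟩; exact hv _⟩
  refine ⟨ContinuousLinearMap.ofTendstoOfBoundedRange L (fun j => v (φ j))
    (tendsto_pi_nhds.2 hL) hbdd, φ, hφ, ?_⟩
  intro y
  exact hL y

set_option maxHeartbeats 1000000

/-- Convergence to the projection, Theorem 2.11.
Let `(t_k) ⊂ (0,∞)` tend to infinity and let `u_{t_k}` be a minimizer of
`E_{t_k}^{α,β}(·;f)` for each `k`. Then `(u_{t_k})` converges in the weak* topology
(equivalently, pointwise on `Y`) to `u_∞ := P^A(f)`. -/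
theorem convergence_to_projection
    {Y : Type*} [NormedAddCommGroup Y] [NormedSpace ℝ Y] [TopologicalSpace.SeparableSpace Y]
    {H : Type*} [NormedAddCommGroup H] [InnerProductSpace ℝ H]
    (A : (Y →L[ℝ] ℝ) →L[ℝ] H) (J : (Y →L[ℝ] ℝ) → ℝ≥0∞) (f : H) (PA : H → (Y →L[ℝ] ℝ))
    (hproper : IsProperFn J) (hconv : EConvexFn J) (hlsc : WeakStarLSC J) (hhom : AbsOneHom J)
    (hdata : ∀ w, A w = f → J w ≠ 0)
    (hA1 : ANormEquiv A J) (hPA : IsAProj A J PA) (hA2 : PoincareIneq A J PA)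
    (hA3 : WeakStarToWeakCont A)
    (α β : ℝ) (hα : 1 ≤ α) (hβ : 1 ≤ β)
    (t : ℕ → ℝ) (htpos : ∀ k, 0 < t k) (htinf : Tendsto t atTop atTop)
    (u : ℕ → (Y →L[ℝ] ℝ)) (hu : ∀ k, IsMinimizer A J f (t k) α β (u k)) :
    ∀ y : Y, Tendsto (fun k => u k y) atTop (𝓝 (PA f y)) := by
  classical
  obtain ⟨c, hc, Cb, hCb, hA1'⟩ := hA1
  obtain ⟨C, hC, hP⟩ := hA2
  have hα0 : (0:ℝ) < α := lt_of_lt_of_le one_pos hα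
  have hβ0 : (0:ℝ) < β := lt_of_lt_of_le one_pos hβ
  obtain ⟨u0, hu0⟩ := hproper
  have hJ0 : J 0 = 0 := by
    have h := hhom 0 u0
    rw [zero_smul] at h
    simp [abs_zero] at h
    exact h
  have hJPA : ∀ g, J (PA g) = 0 := fun g => (hPA g).1
  have hEn : ∀ k, En A J f (t k) α β (u k)
      ≤ ENNReal.ofReal ((1/α) * ‖A (PA f) - f‖ ^ α) := by
    intro k
    have h := hu k (PA f)
    have hEnPA : En A J f (t k) α β (PA f)
        = ENNReal.ofReal ((1/α) * ‖A (PA f) - f‖ ^ α) := by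
      rw [En, hJPA f, ENNReal.zero_rpow_of_pos hβ0, mul_zero, add_zero]
    rw [hEnPA] at h
    exact h
  have hfid : ∀ k, ‖A (u k) - f‖ ≤ ‖A (PA f) - f‖ := by
    intro k
    have h1 : ENNReal.ofReal ((1/α) * ‖A (u k) - f‖ ^ α)
        ≤ ENNReal.ofReal ((1/α) * ‖A (PA f) - f‖ ^ α) :=
      le_trans (le_add_right le_rfl) (hEn k)
    have hnn : (0:ℝ) ≤ (1/α) * ‖A (PA f) - f‖ ^ α := by positivity
    rw [ENNReal.ofReal_le_ofReal_iff hnn] at h1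
    have h2 : ‖A (u k) - f‖ ^ α ≤ ‖A (PA f) - f‖ ^ α :=
      (mul_le_mul_iff_right₀ (by positivity : (0:ℝ) < 1/α)).1 h1
    exact (Real.rpow_le_rpow_iff (norm_nonneg _) (norm_nonneg _) hα0).1 h2
  have hJfin : ∀ k, ENNReal.ofReal (t k / β) * J (u k) ^ β
      ≤ ENNReal.ofReal ((1/α) * ‖A (PA f) - f‖ ^ α) :=
    fun k => le_trans (le_add_left le_rfl) (hEn k)
  have htβ : ∀ k, ENNReal.ofReal (t k / β) ≠ 0 := by
    intro k
    simp only [ne_eq, ENNReal.ofReal_eq_zero, not_le]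
    exact div_pos (htpos k) hβ0
  have hJβ : ∀ k, J (u k) ^ β
      ≤ ENNReal.ofReal ((1/α) * ‖A (PA f) - f‖ ^ α) / ENNReal.ofReal (t k / β) := by
    intro k
    rw [ENNReal.le_div_iff_mul_le (Or.inl (htβ k)) (Or.inl ENNReal.ofReal_ne_top), mul_comm]
    exact hJfin k
  have hdiv : Tendsto (fun k => ENNReal.ofReal ((1/α) * ‖A (PA f) - f‖ ^ α)
      / ENNReal.ofReal (t k / β)) atTop (𝓝 0) := by
    have h1 : Tendsto (fun k => ENNReal.ofReal (t k / β)) atTop (𝓝 ⊤) :=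
      ENNReal.tendsto_ofReal_atTop.comp (htinf.atTop_div_const hβ0)
    have h2 : Tendsto (fun k => (ENNReal.ofReal (t k / β))⁻¹) atTop (𝓝 0) := by
      simpa using ENNReal.tendsto_inv_iff.2 h1
    have h3 : Tendsto (fun k => ENNReal.ofReal ((1/α) * ‖A (PA f) - f‖ ^ α)
        * (ENNReal.ofReal (t k / β))⁻¹) atTop
        (𝓝 (ENNReal.ofReal ((1/α) * ‖A (PA f) - f‖ ^ α) * 0)) :=
      ENNReal.Tendsto.const_mul h2 (Or.inr ENNReal.ofReal_ne_top)
    simpa [div_eq_mul_inv] using h3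
  have hJβ0 : Tendsto (fun k => J (u k) ^ β) atTop (𝓝 0) :=
    tendsto_of_tendsto_of_tendsto_of_le_of_le tendsto_const_nhds hdiv
      (fun k => zero_le) hJβ
  have hJlim : Tendsto (fun k => J (u k)) atTop (𝓝 0) := by
    have hcont : Tendsto (fun x : ℝ≥0∞ => x ^ β⁻¹) (𝓝 0) (𝓝 ((0:ℝ≥0∞) ^ β⁻¹)) :=
      ENNReal.continuous_rpow_const.tendsto 0
    have h4 := hcont.comp hJβ0
    rw [ENNReal.zero_rpow_of_pos (by positivity)] at h4
    have heq : (fun x : ℝ≥0∞ => x ^ β⁻¹) ∘ (fun k => J (u k) ^ β) = fun k => J (u k) := by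
      funext k
      simp only [Function.comp_apply]
      exact ENNReal.rpow_rpow_inv (ne_of_gt hβ0) _
    rwa [heq] at h4
  obtain ⟨K, hK⟩ := eventually_atTop.1 (hJlim.eventually_lt_const (zero_lt_one (α := ℝ≥0∞)))
  have hnorm : ∀ k, K ≤ k → ‖u k‖ ≤ C + (1/c) * (2 * (‖A (PA f) - f‖ + ‖f‖)) := by
    intro k hk
    have h1 : ‖u k - PA (A (u k))‖ ≤ C := by
      have h2 : ENNReal.ofReal ‖u k - PA (A (u k))‖ ≤ ENNReal.ofReal C := by
        calc ENNReal.ofReal ‖u k - PA (A (u k))‖ ≤ ENNReal.ofReal C * J (u k) := hP (u k)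
          _ ≤ ENNReal.ofReal C * 1 := by
              exact mul_le_mul_right (le_of_lt (hK k hk)) _
          _ = ENNReal.ofReal C := mul_one _
      exact (ENNReal.ofReal_le_ofReal_iff hC.le).1 h2
    have h7 : ‖A (u k)‖ ≤ ‖A (PA f) - f‖ + ‖f‖ := by
      calc ‖A (u k)‖ = ‖(A (u k) - f) + f‖ := by rw [sub_add_cancel]
        _ ≤ ‖A (u k) - f‖ + ‖f‖ := norm_add_le _ _
        _ ≤ ‖A (PA f) - f‖ + ‖f‖ := by linarith [hfid k]
    have h3 : ‖PA (A (u k))‖ ≤ (1/c) * (2 * (‖A (PA f) - f‖ + ‖f‖)) := by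
      have h5 : ‖A (PA (A (u k))) - A (u k)‖ ≤ ‖A (u k)‖ := by
        have h6 := (hPA (A (u k))).2.1 0 hJ0
        simpa using h6
      have h4 : ‖A (PA (A (u k)))‖ ≤ 2 * ‖A (u k)‖ := by
        calc ‖A (PA (A (u k)))‖ = ‖(A (PA (A (u k))) - A (u k)) + A (u k)‖ := by
              rw [sub_add_cancel]
          _ ≤ ‖A (PA (A (u k))) - A (u k)‖ + ‖A (u k)‖ := norm_add_le _ _
          _ ≤ 2 * ‖A (u k)‖ := by linarith
      have h6 : c * ‖PA (A (u k))‖ ≤ ‖A (PA (A (u k)))‖ := (hA1' _ (hJPA _)).1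
      calc ‖PA (A (u k))‖ = (1/c) * (c * ‖PA (A (u k))‖) := by field_simp
        _ ≤ (1/c) * (2 * ‖A (u k)‖) := by
            apply mul_le_mul_of_nonneg_left _ (by positivity)
            linarith
        _ ≤ (1/c) * (2 * (‖A (PA f) - f‖ + ‖f‖)) := by
            apply mul_le_mul_of_nonneg_left _ (by positivity)
            linarith
    calc ‖u k‖ = ‖(u k - PA (A (u k))) + PA (A (u k))‖ := by rw [sub_add_cancel]
      _ ≤ ‖u k - PA (A (u k))‖ + ‖PA (A (u k))‖ := norm_add_le _ _
      _ ≤ C + (1/c) * (2 * (‖A (PA f) - f‖ + ‖f‖)) := add_le_add h1 h3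
  intro y
  apply Filter.tendsto_of_subseq_tendsto
  intro ns hns
  obtain ⟨K', hK'⟩ := eventually_atTop.1 (hns.eventually_ge_atTop K)
  obtain ⟨w, φ, hφ, hwy⟩ := seq_banach_alaoglu (fun i => u (ns (K' + i)))
    (C + (1/c) * (2 * (‖A (PA f) - f‖ + ‖f‖)))
    (fun i => hnorm _ (hK' _ (Nat.le_add_right K' i)))
  have hws : Tendsto (fun j => u (ns (K' + φ j))) atTop (@nhds _ (weakStar Y) w) := by
    rw [weakStar, nhds_induced, tendsto_comap_iff]
    exact tendsto_pi_nhds.2 hwy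
  have hidx : Tendsto (fun j => ns (K' + φ j)) atTop atTop :=
    hns.comp (tendsto_atTop_mono (fun j => Nat.le_add_left (φ j) K') hφ.tendsto_atTop)
  have hJsub : Tendsto (fun j => J (u (ns (K' + φ j)))) atTop (𝓝 0) := hJlim.comp hidx
  have hJw : J w = 0 := by
    by_contra h
    have hposJ : 0 < J w := pos_iff_ne_zero.2 h
    obtain ⟨r, hr0, hrw⟩ := exists_between hposJ
    have h1 : ∀ᶠ j in atTop, r < J (u (ns (K' + φ j))) := hws.eventually ((show @LowerSemicontinuous _ _ (weakStar Y) _ J from hlsc) w r hrw)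
    have h2 : ∀ᶠ j in atTop, J (u (ns (K' + φ j))) < r := hJsub.eventually_lt_const hr0
    obtain ⟨j, hj1, hj2⟩ := (h1.and h2).exists
    exact absurd (hj1.trans hj2) (lt_irrefl r)
  have hAw : ∀ h : H, Tendsto (fun j => (⟪A (u (ns (K' + φ j))), h⟫ : ℝ)) atTop
      (𝓝 (⟪A w, h⟫ : ℝ)) := by
    intro h
    exact (@Continuous.tendsto _ _ (weakStar Y) _ _ (hA3 h) w).comp hws
  have hAwf : ‖A w - f‖ ≤ ‖A (PA f) - f‖ := by
    rcases eq_or_lt_of_le (norm_nonneg (A w - f)) with h0 | h0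
    · rw [← h0]; exact norm_nonneg _
    · have hlim : Tendsto (fun j => (⟪A (u (ns (K' + φ j))) - f, A w - f⟫ : ℝ)) atTop
          (𝓝 (⟪A w - f, A w - f⟫ : ℝ)) := by
        simp only [inner_sub_left]
        exact (hAw (A w - f)).sub tendsto_const_nhds
      have hb : ∀ j, (⟪A (u (ns (K' + φ j))) - f, A w - f⟫ : ℝ)
          ≤ ‖A (PA f) - f‖ * ‖A w - f‖ := by
        intro j
        calc (⟪A (u (ns (K' + φ j))) - f, A w - f⟫ : ℝ)
            ≤ ‖A (u (ns (K' + φ j))) - f‖ * ‖A w - f‖ := real_inner_le_norm _ _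
          _ ≤ ‖A (PA f) - f‖ * ‖A w - f‖ :=
              mul_le_mul_of_nonneg_right (hfid _) (norm_nonneg _)
      have hfinal := le_of_tendsto hlim (Eventually.of_forall hb)
      rw [real_inner_self_eq_norm_mul_norm] at hfinal
      exact le_of_mul_le_mul_right hfinal h0
  have hwPA : w = PA f := (hPA f).2.2 w hJw hAwf
  refine ⟨fun j => K' + φ j, ?_⟩
  have hfin := hwy y
  rwa [hwPA] at hfin

end
end

section
/- Let t > 0 and let û be a minimizer of E_t^{1,1}(·;f) with Aû ≠ f. Then every minimizer u of E_t^{1,1}(·;f) satisfies Au ∈ {f + c(Aû − f) : c ≥ 0}; that is, the set of forward solutions at time t is contained in the one-parameter family {f + c(Aû − f) : c ≥ 0}. -/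
open Filter Topology Set
open scoped ENNReal RealInnerProductSpace

noncomputable section

/-- Uniqueness of the forward solution path II, Theorem 2.14.
Let `t > 0` and let `û` be a minimizer of `E_t^{1,1}(·;f)` with `Aû ≠ f`. Then every
minimizer `u` of `E_t^{1,1}(·;f)` satisfies `Au = f + c(Aû − f)` for some `c ≥ 0`. -/
theorem forward_solutions_one_parameter_family
    {Y : Type*} [NormedAddCommGroup Y] [NormedSpace ℝ Y]
    {H : Type*} [NormedAddCommGroup H] [InnerProductSpace ℝ H]
    (A : (Y →L[ℝ] ℝ) →L[ℝ] H) (J : (Y →L[ℝ] ℝ) → ℝ≥0∞) (f : H)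
    (hproper : IsProperFn J) (hconv : EConvexFn J) (hlsc : WeakStarLSC J) (hhom : AbsOneHom J)
    (hdata : ∀ w, A w = f → J w ≠ 0)
    (t : ℝ) (ht : 0 < t)
    (uhat : Y →L[ℝ] ℝ) (huhat : IsMinimizer A J f t 1 1 uhat) (hne : A uhat ≠ f) :
    ∀ u, IsMinimizer A J f t 1 1 u → ∃ c : ℝ, 0 ≤ c ∧ A u = f + c • (A uhat - f) := by
  intro u hu
  have hEn1 : ∀ v, En A J f t 1 1 v
      = ENNReal.ofReal ‖A v - f‖ + ENNReal.ofReal t * J v := by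
    intro v; simp [En]
  obtain ⟨u₀, hu₀⟩ := hproper
  have hfin0 : En A J f t 1 1 u₀ ≠ ⊤ := by
    rw [hEn1]
    exact ENNReal.add_ne_top.mpr ⟨ENNReal.ofReal_ne_top,
      ENNReal.mul_ne_top ENNReal.ofReal_ne_top hu₀⟩
  have htne : ENNReal.ofReal t ≠ 0 := by
    simp [ENNReal.ofReal_eq_zero, not_le.mpr ht]
  have hJfin : ∀ v, IsMinimizer A J f t 1 1 v → J v ≠ ⊤ := by
    intro v hv hJ
    have h1 : En A J f t 1 1 v ≠ ⊤ := ne_top_of_le_ne_top hfin0 (hv u₀)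
    rw [hEn1, hJ, ENNReal.mul_top htne] at h1
    simp at h1
  have hJu : J u ≠ ⊤ := hJfin u hu
  have hJuhat : J uhat ≠ ⊤ := hJfin uhat huhat
  -- the midpoint
  set m : Y →L[ℝ] ℝ := (1/2 : ℝ) • u + (1/2 : ℝ) • uhat with hm
  have hAm : A m - f = (1/2 : ℝ) • ((A u - f) + (A uhat - f)) := by
    simp only [hm, map_add, map_smul]
    rw [smul_add, smul_sub, smul_sub]
    have : f = (1/2 : ℝ) • f + (1/2 : ℝ) • f := by
      rw [← add_smul]; norm_num
    nth_rewrite 1 [this]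
    abel
  -- key: equality in the triangle inequality
  have hkey : ‖(A u - f) + (A uhat - f)‖ = ‖A u - f‖ + ‖A uhat - f‖ := by
    by_contra hneq
    have hlt : ‖(A u - f) + (A uhat - f)‖ < ‖A u - f‖ + ‖A uhat - f‖ :=
      lt_of_le_of_ne (norm_add_le _ _) hneq
    -- energy of midpoint, doubled
    have hJm : J m ≤ ENNReal.ofReal (1/2) * J u + ENNReal.ofReal (1/2) * J uhat :=
      hconv u uhat (1/2) (1/2) (by norm_num) (by norm_num) (by norm_num)
    have hhalf : (ENNReal.ofReal (1/2)) + (ENNReal.ofReal (1/2)) = 1 := by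
      rw [← ENNReal.ofReal_add (by norm_num) (by norm_num)]; norm_num
    have hnm : ‖A m - f‖ = (1/2 : ℝ) * ‖(A u - f) + (A uhat - f)‖ := by
      rw [hAm, norm_smul]; norm_num
    have hsum2 : En A J f t 1 1 m + En A J f t 1 1 m
        < En A J f t 1 1 u + En A J f t 1 1 uhat := by
      rw [hEn1, hEn1, hEn1]
      have hT : ENNReal.ofReal t * J m + ENNReal.ofReal t * J m
          ≤ ENNReal.ofReal t * J u + ENNReal.ofReal t * J uhat := by
        calc ENNReal.ofReal t * J m + ENNReal.ofReal t * J m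
            ≤ ENNReal.ofReal t * (ENNReal.ofReal (1/2) * J u + ENNReal.ofReal (1/2) * J uhat)
              + ENNReal.ofReal t * (ENNReal.ofReal (1/2) * J u + ENNReal.ofReal (1/2) * J uhat) := by
              gcongr
          _ = ENNReal.ofReal t * J u + ENNReal.ofReal t * J uhat := by
              rw [← mul_add, add_add_add_comm, ← add_mul, ← add_mul, hhalf, one_mul, one_mul,
                mul_add]
        -- done
      have hTne : ENNReal.ofReal t * J u + ENNReal.ofReal t * J uhat ≠ ⊤ :=
        ENNReal.add_ne_top.mpr ⟨ENNReal.mul_ne_top ENNReal.ofReal_ne_top hJu,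
          ENNReal.mul_ne_top ENNReal.ofReal_ne_top hJuhat⟩
      have hN : ENNReal.ofReal ‖A m - f‖ + ENNReal.ofReal ‖A m - f‖
          < ENNReal.ofReal ‖A u - f‖ + ENNReal.ofReal ‖A uhat - f‖ := by
        rw [← ENNReal.ofReal_add (norm_nonneg _) (norm_nonneg _),
          ← ENNReal.ofReal_add (norm_nonneg _) (norm_nonneg _)]
        refine (ENNReal.ofReal_lt_ofReal_iff (lt_of_le_of_lt (norm_nonneg _) hlt)).mpr ?_
        rw [hnm]
        linarith
      calc ENNReal.ofReal ‖A m - f‖ + ENNReal.ofReal t * J m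
            + (ENNReal.ofReal ‖A m - f‖ + ENNReal.ofReal t * J m)
          = (ENNReal.ofReal ‖A m - f‖ + ENNReal.ofReal ‖A m - f‖)
            + (ENNReal.ofReal t * J m + ENNReal.ofReal t * J m) := by
            rw [add_add_add_comm]
        _ < (ENNReal.ofReal ‖A u - f‖ + ENNReal.ofReal ‖A uhat - f‖)
            + (ENNReal.ofReal t * J u + ENNReal.ofReal t * J uhat) := by
            have hJmne : ENNReal.ofReal t * J m + ENNReal.ofReal t * J m ≠ ⊤ := by
              have hJmfin : J m ≠ ⊤ := by
                refine ne_top_of_le_ne_top ?_ hJm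
                exact ENNReal.add_ne_top.mpr ⟨ENNReal.mul_ne_top ENNReal.ofReal_ne_top hJu,
                  ENNReal.mul_ne_top ENNReal.ofReal_ne_top hJuhat⟩
              exact ENNReal.add_ne_top.mpr ⟨ENNReal.mul_ne_top ENNReal.ofReal_ne_top hJmfin,
                ENNReal.mul_ne_top ENNReal.ofReal_ne_top hJmfin⟩
            exact ENNReal.add_lt_add_of_lt_of_le hJmne hN hT
        _ = ENNReal.ofReal ‖A u - f‖ + ENNReal.ofReal t * J u
            + (ENNReal.ofReal ‖A uhat - f‖ + ENNReal.ofReal t * J uhat) := by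
            rw [add_add_add_comm]
    have hge : En A J f t 1 1 u + En A J f t 1 1 uhat
        ≤ En A J f t 1 1 m + En A J f t 1 1 m :=
      add_le_add (hu m) (huhat m)
    exact absurd (lt_of_le_of_lt hge hsum2) (lt_irrefl _)
  -- conclude via same-ray
  have hray : SameRay ℝ (A uhat - f) (A u - f) := by
    have : SameRay ℝ (A u - f) (A uhat - f) := sameRay_iff_norm_add.mpr hkey
    exact this.symm
  have hne' : A uhat - f ≠ 0 := sub_ne_zero.mpr hne
  obtain ⟨c, hc0, hc⟩ := hray.exists_nonneg_left hne'
  exact ⟨c, hc0, by rw [hc]; abel⟩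

end
end

section
/- The forward solution of E_t^{1,1}(·;f) is uniquely determined for Lebesgue-almost every t > 0; that is, the set of t > 0 for which there exist minimizers u_0, u_1 of E_t^{1,1}(·;f) with Au_0 ≠ Au_1 has Lebesgue measure zero. -/
open Filter Topology Set
open scoped ENNReal RealInnerProductSpace

noncomputable section

section Aux

variable {X : Type*} [NormedAddCommGroup X] [NormedSpace ℝ X]
  {H : Type*} [NormedAddCommGroup H] [InnerProductSpace ℝ H]

lemma En_one_one (A : X →L[ℝ] H) (J : X → ℝ≥0∞) (f : H) (t : ℝ) (u : X) :
    En A J f t 1 1 u = ENNReal.ofReal ‖A u - f‖ + ENNReal.ofReal t * J u := by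
  simp [En, Real.rpow_one]

lemma J_ne_top_of_min {A : X →L[ℝ] H} {J : X → ℝ≥0∞} {f : H} {t : ℝ}
    (ht : 0 < t) (hproper : IsProperFn J) {u : X}
    (hu : IsMinimizer A J f t 1 1 u) : J u ≠ ⊤ := by
  obtain ⟨w, hw⟩ := hproper
  have h := hu w
  rw [En_one_one, En_one_one] at h
  have hfin : ENNReal.ofReal ‖A w - f‖ + ENNReal.ofReal t * J w ≠ ⊤ := by
    simp [ENNReal.add_ne_top, ENNReal.mul_ne_top, hw]
  intro htop
  apply hfin
  have : ENNReal.ofReal t * J u = ⊤ := by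
    rw [htop, ENNReal.mul_top]
    simp [ENNReal.ofReal_eq_zero, ht.not_ge]
  exact top_le_iff.mp (le_trans (by simp [this]) h)

lemma eq_of_norm_midpoint (a b : H) (h : ‖a‖ = ‖b‖) (hm : ‖a‖ ≤ ‖(2:ℝ)⁻¹ • a + (2:ℝ)⁻¹ • b‖) :
    a = b := by
  rw [← sub_eq_zero, ← norm_eq_zero]
  have h1 : ‖(2:ℝ)⁻¹ • a + (2:ℝ)⁻¹ • b‖ ^ 2 = (2:ℝ)⁻¹ ^2 * (‖a‖^2 + 2*⟪a,b⟫ + ‖b‖^2) := by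
    rw [← smul_add, norm_smul, mul_pow, @norm_add_sq_real]
    norm_num
  have h2 : ‖a - b‖ ^ 2 = ‖a‖^2 - 2*⟪a,b⟫ + ‖b‖^2 := @norm_sub_sq_real _ _ _ a b
  have h3 : ‖(2:ℝ)⁻¹ • a + (2:ℝ)⁻¹ • b‖ ≤ ‖a‖ := by
    calc ‖(2:ℝ)⁻¹ • a + (2:ℝ)⁻¹ • b‖ ≤ ‖(2:ℝ)⁻¹ • a‖ + ‖(2:ℝ)⁻¹ • b‖ := norm_add_le _ _
    _ = ‖a‖ := by rw [norm_smul, norm_smul, h]; simp; ring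
  have h4 : ‖(2:ℝ)⁻¹ • a + (2:ℝ)⁻¹ • b‖ = ‖a‖ := le_antisymm h3 hm
  have hb2 : ‖b‖^2 = ‖a‖^2 := by rw [h]
  have hm2 : ‖(2:ℝ)⁻¹ • a + (2:ℝ)⁻¹ • b‖^2 = ‖a‖^2 := by rw [h4]
  have hin : ⟪a,b⟫ = ‖a‖^2 := by nlinarith [h1, hm2, hb2]
  have hz : ‖a - b‖ ^ 2 = 0 := by rw [h2]; linarith
  exact pow_eq_zero_iff (two_ne_zero) |>.mp hz

/-- If two minimizers have the same (finite) `J` value, their images agree. -/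
lemma image_eq_of_J_eq {A : X →L[ℝ] H} {J : X → ℝ≥0∞} {f : H} {t : ℝ}
    (ht : 0 < t) (hproper : IsProperFn J) (hconv : EConvexFn J) {u₀ u₁ : X}
    (h0 : IsMinimizer A J f t 1 1 u₀) (h1 : IsMinimizer A J f t 1 1 u₁)
    (hJ : J u₀ = J u₁) : A u₀ = A u₁ := by
  have hJ0 : J u₀ ≠ ⊤ := J_ne_top_of_min ht hproper h0
  have htJ : ENNReal.ofReal t * J u₀ ≠ ⊤ := ENNReal.mul_ne_top ENNReal.ofReal_ne_top hJ0
  -- residuals are equal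
  have e01 := h0 u₁; have e10 := h1 u₀
  rw [En_one_one, En_one_one] at e01 e10
  rw [← hJ] at e10
  have hr : ‖A u₀ - f‖ = ‖A u₁ - f‖ := by
    have l1 : ENNReal.ofReal ‖A u₀ - f‖ ≤ ENNReal.ofReal ‖A u₁ - f‖ :=
      (ENNReal.add_le_add_iff_right htJ).mp (by rw [hJ] at e01 ⊢; exact e01)
    have l2 : ENNReal.ofReal ‖A u₁ - f‖ ≤ ENNReal.ofReal ‖A u₀ - f‖ :=
      (ENNReal.add_le_add_iff_right htJ).mp e10
    have := le_antisymm l1 l2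
    exact le_antisymm (by simpa [norm_nonneg] using ENNReal.ofReal_le_ofReal_iff (norm_nonneg _) |>.mp l1)
      (by simpa using ENNReal.ofReal_le_ofReal_iff (norm_nonneg _) |>.mp l2)
  -- midpoint
  set w := (2:ℝ)⁻¹ • u₀ + (2:ℝ)⁻¹ • u₁ with hwdef
  have hJw : J w ≤ J u₀ := by
    have := hconv u₀ u₁ (2:ℝ)⁻¹ (2:ℝ)⁻¹ (by norm_num) (by norm_num) (by norm_num)
    calc J w ≤ ENNReal.ofReal (2:ℝ)⁻¹ * J u₀ + ENNReal.ofReal (2:ℝ)⁻¹ * J u₁ := this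
    _ = (ENNReal.ofReal (2:ℝ)⁻¹ + ENNReal.ofReal (2:ℝ)⁻¹) * J u₀ := by rw [← hJ]; ring
    _ = J u₀ := by
        rw [← ENNReal.ofReal_add (by norm_num) (by norm_num)]
        norm_num
  have hmin := h0 w
  rw [En_one_one, En_one_one] at hmin
  have hAw : A w = (2:ℝ)⁻¹ • (A u₀) + (2:ℝ)⁻¹ • (A u₁) := by
    simp [hwdef, map_add, map_smul]
  have hres : A w - f = (2:ℝ)⁻¹ • (A u₀ - f) + (2:ℝ)⁻¹ • (A u₁ - f) := by
    rw [hAw]; module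
  -- ‖A u₀ - f‖ ≤ ‖A w - f‖
  have hge : ‖A u₀ - f‖ ≤ ‖A w - f‖ := by
    by_contra hlt
    push_neg at hlt
    have hJw' : ENNReal.ofReal t * J w ≤ ENNReal.ofReal t * J u₀ :=
      mul_le_mul_right hJw _
    have : ENNReal.ofReal ‖A w - f‖ + ENNReal.ofReal t * J w <
        ENNReal.ofReal ‖A u₀ - f‖ + ENNReal.ofReal t * J u₀ := by
      apply ENNReal.add_lt_add_of_lt_of_le (lt_of_le_of_lt hJw' htJ.lt_top).ne
      · exact ENNReal.ofReal_lt_ofReal_iff_of_nonneg (norm_nonneg _) |>.mpr hlt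
      · exact hJw'
    exact absurd hmin this.not_ge
  have := eq_of_norm_midpoint (A u₀ - f) (A u₁ - f) hr (by rw [← hres]; exact hge)
  have : A u₀ - f = A u₁ - f := this
  exact sub_left_injective this

/-- Monotonicity of J values of minimizers. -/
lemma J_mono {A : X →L[ℝ] H} {J : X → ℝ≥0∞} {f : H} {t t' : ℝ}
    (ht : 0 < t) (htt' : t < t') (hproper : IsProperFn J) {u v : X}
    (hu : IsMinimizer A J f t 1 1 u) (hv : IsMinimizer A J f t' 1 1 v) :
    (J v).toReal ≤ (J u).toReal := by
  have ht' : (0:ℝ) < t' := ht.trans htt'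
  have hJu : J u ≠ ⊤ := J_ne_top_of_min ht hproper hu
  have hJv : J v ≠ ⊤ := J_ne_top_of_min ht' hproper hv
  set ju := (J u).toReal; set jv := (J v).toReal
  have e1 := hu v; have e2 := hv u
  rw [En_one_one, En_one_one] at e1 e2
  have toR : ∀ (s : ℝ) (x y : X), 0 < s → J x ≠ ⊤ → J y ≠ ⊤ →
      ENNReal.ofReal ‖A x - f‖ + ENNReal.ofReal s * J x ≤
      ENNReal.ofReal ‖A y - f‖ + ENNReal.ofReal s * J y →
      ‖A x - f‖ + s * (J x).toReal ≤ ‖A y - f‖ + s * (J y).toReal := by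
    intro s x y hs hx hy hle
    have := ENNReal.toReal_mono (by simp [ENNReal.add_ne_top, ENNReal.mul_ne_top, hy]) hle
    rwa [ENNReal.toReal_add (by simp) (ENNReal.mul_ne_top (by simp) hx),
      ENNReal.toReal_add (by simp) (ENNReal.mul_ne_top (by simp) hy),
      ENNReal.toReal_mul, ENNReal.toReal_mul, ENNReal.toReal_ofReal (norm_nonneg _),
      ENNReal.toReal_ofReal (norm_nonneg _), ENNReal.toReal_ofReal hs.le] at this
  have r1 := toR t u v ht hJu hJv e1
  have r2 := toR t' v u ht' hJv hJu e2
  nlinarith [r1, r2]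

end Aux

/-- Corollary 2.19.
The forward solution of `E_t^{1,1}(·;f)` is uniquely determined for Lebesgue-almost every
`t > 0`: the set of `t > 0` admitting two minimizers with different forward images has
Lebesgue measure zero. -/
theorem forward_solution_ae_unique
    {Y : Type*} [NormedAddCommGroup Y] [NormedSpace ℝ Y]
    {H : Type*} [NormedAddCommGroup H] [InnerProductSpace ℝ H]
    (A : (Y →L[ℝ] ℝ) →L[ℝ] H) (J : (Y →L[ℝ] ℝ) → ℝ≥0∞) (f : H)
    (hproper : IsProperFn J) (hconv : EConvexFn J) (hlsc : WeakStarLSC J) (hhom : AbsOneHom J)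
    (hdata : ∀ w, A w = f → J w ≠ 0) :
    MeasureTheory.volume {t : ℝ | 0 < t ∧ ∃ u₀ u₁, IsMinimizer A J f t 1 1 u₀ ∧
      IsMinimizer A J f t 1 1 u₁ ∧ A u₀ ≠ A u₁} = 0 := by
  set S := {t : ℝ | 0 < t ∧ ∃ u₀ u₁, IsMinimizer A J f t 1 1 u₀ ∧
      IsMinimizer A J f t 1 1 u₁ ∧ A u₀ ≠ A u₁} with hS
  -- to each bad t assign a rational strictly between two minimizer J-values
  have hP : ∀ t ∈ S, ∃ q : ℚ, ∃ u₀ u₁, IsMinimizer A J f t 1 1 u₀ ∧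
      IsMinimizer A J f t 1 1 u₁ ∧ (J u₀).toReal < (q:ℝ) ∧ (q:ℝ) < (J u₁).toReal := by
    rintro t ⟨ht, u₀, u₁, h0, h1, hA⟩
    have hJne : J u₀ ≠ J u₁ := fun h => hA (image_eq_of_J_eq ht hproper hconv h0 h1 h)
    have hJ0 : J u₀ ≠ ⊤ := J_ne_top_of_min ht hproper h0
    have hJ1 : J u₁ ≠ ⊤ := J_ne_top_of_min ht hproper h1
    have hne : (J u₀).toReal ≠ (J u₁).toReal := by
      intro h; exact hJne ((ENNReal.toReal_eq_toReal_iff' hJ0 hJ1).mp h)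
    rcases hne.lt_or_gt with hlt | hlt
    · obtain ⟨q, hq1, hq2⟩ := exists_rat_btwn hlt
      exact ⟨q, u₀, u₁, h0, h1, hq1, hq2⟩
    · obtain ⟨q, hq1, hq2⟩ := exists_rat_btwn hlt
      exact ⟨q, u₁, u₀, h1, h0, hq1, hq2⟩
  choose! φ hφ using hP
  -- φ is strictly decreasing on S
  have key : ∀ a ∈ S, ∀ b ∈ S, a < b → φ b < φ a := by
    intro a ha b hb hab
    obtain ⟨u₀, u₁, h0, h1, hq1, hq2⟩ := hφ a ha
    obtain ⟨v₀, v₁, g0, g1, hr1, hr2⟩ := hφ b hb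
    have ha0 : 0 < a := ha.1
    have h₁ : (J v₁).toReal ≤ (J u₀).toReal := J_mono ha0 hab hproper h0 g1
    have : (φ b : ℝ) < (φ a : ℝ) := lt_of_lt_of_le hr2 (le_trans h₁ hq1.le)
    exact_mod_cast this
  -- hence the fibers of φ on S are subsingletons, so S is countable
  have hsub : S ⊆ ⋃ (q : ℚ), {t | t ∈ S ∧ φ t = q} := fun t ht =>
    Set.mem_iUnion.mpr ⟨φ t, ht, rfl⟩
  have hcnt : S.Countable := by
    refine Set.Countable.mono hsub (Set.countable_iUnion fun q => ?_)
    apply Set.Subsingleton.countable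
    rintro x ⟨hx, hxq⟩ y ⟨hy, hyq⟩
    by_contra hxy
    rcases lt_or_gt_of_ne hxy with h | h
    · exact absurd (hyq.trans hxq.symm) (key x hx y hy h).ne
    · exact absurd (hxq.trans hyq.symm) (key y hy x hx h).ne
  exact hcnt.measure_zero _


end
end

section
/- Let α ≥ 2 and β ≥ 1, let 0 < s < t, and let u_s and u_t be minimizers of E_s^{α,β}(·;f) and E_t^{α,β}(·;f), respectively. Then ‖Au_t − Au_s‖_H ≤ ((t − s)/t) ‖Au_t − f‖_H ≤ ((t − s)/t) ‖f‖_H. If the range condition holds, then ‖Au_t − Au_s‖_H ≤ J_min^{β/α} (t − s)/t^{(α−1)/α}; if additionally the source condition holds, then ‖Au_t − Au_s‖_H ≤ s_*^{1/(α−1)} J_min^{(β−1)/(α−1)} (t − s)/t^{(α−2)/(α−1)}. -/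
open Filter Topology Set
open scoped ENNReal RealInnerProductSpace

noncomputable section

namespace LipAux

lemma rpow_sub_two_mul_sq {x : ℝ} (hx : 0 ≤ x) {α : ℝ} (hα : 0 < α) :
    x ^ (α - 2) * x ^ (2:ℕ) = x ^ α := by
  rcases eq_or_lt_of_le hx with h | h
  · rw [← h]
    simp [Real.zero_rpow hα.ne', zero_pow]
  · rw [← Real.rpow_natCast x 2, ← Real.rpow_add h]
    norm_num

lemma rpow_sub_one_mul {x : ℝ} (hx : 0 < x) (α : ℝ) : x ^ (α - 1) * x = x ^ α := by
  nth_rewrite 2 [← Real.rpow_one x]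
  rw [← Real.rpow_add hx]
  norm_num

lemma tfact {t : ℝ} (s : ℝ) (ht : 0 < t) {p q : ℝ} (hpq : p + q = 1) :
    (t - s) / t * t ^ p = (t - s) / t ^ q := by
  have h1 : (0:ℝ) < t ^ q := Real.rpow_pos_of_pos ht q
  rw [div_mul_eq_mul_div, div_eq_div_iff ht.ne' h1.ne']
  rw [mul_assoc, ← Real.rpow_add ht, hpq, Real.rpow_one]

lemma sq_rpow_half' (x p q : ℝ) (hx : 0 ≤ x) (hpq : 2 * p = q) : (x ^ 2) ^ p = x ^ q := by
  rw [← Real.rpow_natCast x 2, ← Real.rpow_mul hx]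
  norm_num [hpq]

lemma ereal_coe_toReal {x : ℝ≥0∞} (h : x ≠ ⊤) : ((x.toReal : ℝ) : EReal) = (x : EReal) := by
  lift x to NNReal using h
  rw [ENNReal.coe_toReal]; rfl

lemma key_arith (x y i X Y s t D : ℝ) (hs : 0 < s) (hst : s < t)
    (hx : 0 ≤ x) (hxy : x ≤ y) (hXY : X ≤ Y)
    (hXpos : 0 < x → 0 < X) (hYpos : 0 < y → 0 < Y)
    (hixy : i ≤ x * y) (hixy2 : -(x * y) ≤ i)
    (hkey : s * (Y * (y ^ 2 - i)) ≤ t * (X * (i - x ^ 2)))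
    (hD2 : D ^ 2 = x ^ 2 + y ^ 2 - 2 * i) (hD : 0 ≤ D) :
    D ≤ (t - s) / t * y := by
  have ht : 0 < t := hs.trans hst
  have hy : 0 ≤ y := hx.trans hxy
  have hR0 : 0 ≤ (t - s) / t * y := mul_nonneg (div_nonneg (by linarith) ht.le) hy
  rcases eq_or_lt_of_le hx with hx0 | hx0
  · -- x = 0
    rw [← hx0] at hixy hixy2 hkey hD2
    simp only [zero_mul, neg_zero, zero_pow] at hixy hixy2
    have hi : i = 0 := le_antisymm hixy hixy2
    rw [hi] at hkey hD2
    have hy0 : y = 0 := by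
      by_contra hy0
      have hy' : 0 < y := lt_of_le_of_ne hy (Ne.symm hy0)
      have h3 : 0 < s * (Y * (y * y)) := mul_pos hs (mul_pos (hYpos hy') (mul_pos hy' hy'))
      linarith [hkey, h3]
    have h1 : D ^ 2 = 0 := by rw [hD2, hy0]; ring
    have h2 : D = 0 := by
      have := (pow_eq_zero_iff (two_ne_zero)).1 h1
      simpa using this
    linarith
  · -- x > 0
    have hX' := hXpos hx0
    have hy' : 0 < y := hx0.trans_le hxy
    have hY' := hYpos hy'
    obtain ⟨u, hu⟩ : ∃ u : ℝ, u = y ^ 2 - i := ⟨_, rfl⟩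
    obtain ⟨v, hv⟩ : ∃ v : ℝ, v = i - x ^ 2 := ⟨_, rfl⟩
    rw [← hu, ← hv] at hkey
    have hu0 : 0 ≤ u := by
      rw [hu]; linarith [mul_nonneg hy (sub_nonneg.2 hxy)]
    have hv0 : 0 ≤ v := by
      by_contra hc
      push_neg at hc
      have h1 : t * (X * v) < 0 := mul_neg_of_pos_of_neg ht (mul_neg_of_pos_of_neg hX' hc)
      have h2 : 0 ≤ s * (Y * u) := by positivity
      linarith
    have hB : s * u ≤ t * v := by
      have h2 : Y * (s * u) ≤ Y * (t * v) := by
        calc Y * (s * u) = s * (Y * u) := by ring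
          _ ≤ t * (X * v) := hkey
          _ ≤ t * (Y * v) :=
              mul_le_mul_of_nonneg_left (mul_le_mul_of_nonneg_right hXY hv0) ht.le
          _ = Y * (t * v) := by ring
      exact le_of_mul_le_mul_left h2 hY'
    have hB' : s * (y ^ 2 - i) ≤ t * (i - x ^ 2) := by rw [← hu, ← hv]; exact hB
    have hA : s * y ≤ t * x := by
      have hq : (s * y - t * x) * (y - x) ≤ 0 := by
        have h1 : (s + t) * i ≤ (s + t) * (x * y) :=
          mul_le_mul_of_nonneg_left hixy (by linarith)
        linarith [h1, hB']
      rcases eq_or_lt_of_le hxy with he | hlt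
      · rw [← he]; linarith [mul_nonneg (by linarith : (0:ℝ) ≤ t - s) hx]
      · by_contra hc
        push_neg at hc
        linarith [hq, mul_pos (by linarith : (0:ℝ) < s * y - t * x)
          (by linarith : (0:ℝ) < y - x)]
    have c2 : s ^ 2 * y ^ 2 ≤ t ^ 2 * x ^ 2 := by
      calc s ^ 2 * y ^ 2 = (s * y) * (s * y) := by ring
        _ ≤ (t * x) * (t * x) :=
          mul_le_mul hA hA (mul_nonneg hs.le hy) (mul_nonneg ht.le hx)
        _ = t ^ 2 * x ^ 2 := by ring
    have e1 : (t + s) * (u - v) ≤ (t - s) * (u + v) := by linarith [hB]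
    have e2 : t ^ 2 * ((t - s) * (u + v)) ≤ (t - s) ^ 2 * (t + s) * y ^ 2 := by
      have huv : u + v = y ^ 2 - x ^ 2 := by rw [hu, hv]; ring
      rw [huv]
      have h1 : (t - s) * (s ^ 2 * y ^ 2) ≤ (t - s) * (t ^ 2 * x ^ 2) :=
        mul_le_mul_of_nonneg_left c2 (by linarith)
      linarith [h1]
    have e3 : D ^ 2 * t ^ 2 * (t + s) ≤ (t - s) ^ 2 * y ^ 2 * (t + s) := by
      have hDuv : D ^ 2 = u - v := by rw [hD2, hu, hv]; ring
      rw [hDuv]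
      have h1 := mul_le_mul_of_nonneg_left e1 (sq_nonneg t)
      linarith [h1, e2]
    have e4 : D ^ 2 * t ^ 2 ≤ (t - s) ^ 2 * y ^ 2 :=
      le_of_mul_le_mul_right e3 (by linarith)
    have hD2R : D ^ 2 ≤ ((t - s) / t * y) ^ 2 := by
      rw [div_mul_eq_mul_div, div_pow, le_div_iff₀ (by positivity)]
      linarith [e4]
    have := Real.sqrt_le_sqrt hD2R
    rwa [Real.sqrt_sq hD, Real.sqrt_sq hR0] at this

lemma key_ineq {H : Type*} [NormedAddCommGroup H] [InnerProductSpace ℝ H]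
    (a b : H) {p s t : ℝ} (hs : 0 < s) (hst : s < t) (hp : 0 ≤ p)
    (hab : ‖a‖ ≤ ‖b‖)
    (hkey : s * (‖b‖ ^ p * ⟪b, b - a⟫) ≤ t * (‖a‖ ^ p * ⟪a, b - a⟫)) :
    ‖b - a‖ ≤ (t - s) / t * ‖b‖ := by
  have hub : ⟪b, b - a⟫ = ‖b‖ ^ 2 - ⟪a, b⟫ := by
    rw [inner_sub_right, real_inner_self_eq_norm_sq, real_inner_comm]
  have hva : ⟪a, b - a⟫ = ⟪a, b⟫ - ‖a‖ ^ 2 := by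
    rw [inner_sub_right, real_inner_self_eq_norm_sq]
  rw [hub, hva] at hkey
  refine key_arith ‖a‖ ‖b‖ ⟪a, b⟫ (‖a‖ ^ p) (‖b‖ ^ p) s t ‖b - a‖ hs hst
    (norm_nonneg a) hab
    (Real.rpow_le_rpow (norm_nonneg a) hab hp)
    (fun h => Real.rpow_pos_of_pos h p) (fun h => Real.rpow_pos_of_pos h p)
    (real_inner_le_norm a b) ?_ hkey ?_ (norm_nonneg _)
  · have := abs_real_inner_le_norm a b
    rw [abs_le] at this
    linarith [this.1]
  · rw [norm_sub_sq_real, real_inner_comm]; ring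

section EnLemmas
variable {X : Type*} [NormedAddCommGroup X] [NormedSpace ℝ X]
    {H : Type*} [NormedAddCommGroup H] [InnerProductSpace ℝ H]
    (A : X →L[ℝ] H) (J : X → ℝ≥0∞) (f : H)

lemma en_ne_top {t α β : ℝ} (ht : 0 ≤ t) (hβ : 1 ≤ β) {u : X} (hu : J u ≠ ⊤) :
    En A J f t α β u ≠ ⊤ := by
  have h1 : J u ^ β ≠ ⊤ := ENNReal.rpow_ne_top_of_nonneg (by linarith) hu
  simp [En, ENNReal.add_ne_top, ENNReal.mul_ne_top, ENNReal.ofReal_ne_top, h1]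

lemma min_ne_top {t α β : ℝ} (ht : 0 < t) (hβ : 1 ≤ β) {u : X}
    (hproper : IsProperFn J) (hmin : IsMinimizer A J f t α β u) : J u ≠ ⊤ := by
  obtain ⟨u0, hu0⟩ := hproper
  have h := (hmin u0).trans_lt (lt_top_iff_ne_top.2 (en_ne_top A J f ht.le hβ hu0))
  rw [En] at h
  have h2 : ENNReal.ofReal (t / β) * J u ^ β ≠ ⊤ := by
    intro hc
    rw [hc] at h; simp at h
  intro hc
  have htβ : (0:ℝ) < t / β := div_pos ht (by linarith)
  rw [hc] at h2
  apply h2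
  rw [ENNReal.top_rpow_of_pos (by linarith), ENNReal.mul_top]
  simpa [ENNReal.ofReal_eq_zero] using htβ.not_ge

lemma en_toReal {t α β : ℝ} (ht : 0 ≤ t) (hα : 0 < α) (hβ : 1 ≤ β) {u : X} (hu : J u ≠ ⊤) :
    (En A J f t α β u).toReal
      = (1 / α) * ‖A u - f‖ ^ α + (t / β) * (J u).toReal ^ β := by
  have h1 : J u ^ β ≠ ⊤ := ENNReal.rpow_ne_top_of_nonneg (by linarith) hu
  rw [En, ENNReal.toReal_add (by simp) (ENNReal.mul_ne_top (by simp) h1),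
    ENNReal.toReal_mul, ENNReal.toReal_ofReal
      (mul_nonneg (by positivity) (Real.rpow_nonneg (norm_nonneg _) _)),
    ENNReal.toReal_ofReal (div_nonneg ht (by linarith)),
    ENNReal.toReal_rpow]

lemma en_cmp {t α β : ℝ} (ht : 0 ≤ t) (hα : 0 < α) (hβ : 1 ≤ β) {u v : X}
    (hmin : IsMinimizer A J f t α β u) (hu : J u ≠ ⊤) (hv : J v ≠ ⊤) :
    (1 / α) * ‖A u - f‖ ^ α + (t / β) * (J u).toReal ^ β
      ≤ (1 / α) * ‖A v - f‖ ^ α + (t / β) * (J v).toReal ^ β := by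
  rw [← en_toReal A J f ht hα hβ hu, ← en_toReal A J f ht hα hβ hv]
  exact ENNReal.toReal_mono (en_ne_top A J f ht hβ hv) (hmin v)

lemma euler_lagrange (hconv : EConvexFn J) {t α β : ℝ} (ht : 0 < t) (hα : 2 ≤ α) (hβ : 1 ≤ β)
    {u v : X} (hmin : IsMinimizer A J f t α β u) (hu : J u ≠ ⊤) (hv : J v ≠ ⊤) :
    0 ≤ ‖A u - f‖ ^ (α - 2) * ⟪A u - f, A v - A u⟫ +
        t * (J u).toReal ^ (β - 1) * ((J v).toReal - (J u).toReal) := by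
  have hα0 : (0:ℝ) < α := by linarith
  have hβ0 : (0:ℝ) < β := by linarith
  set b : H := A u - f with hb
  set c : H := A v - A u with hc
  set i : ℝ := ⟪b, c⟫ with hi
  set Jt : ℝ := (J u).toReal with hJt
  set Jv : ℝ := (J v).toReal with hJv
  set δ : ℝ := Jv - Jt with hδ
  set g : ℝ → ℝ := fun ε =>
    (1 / α) * (‖b‖ ^ 2 + ε * (2 * i) + ε ^ 2 * ‖c‖ ^ 2) ^ (α / 2)
      + (t / β) * (Jt + ε * δ) ^ β with hg
  have hinner1 : HasDerivAt (fun ε : ℝ => ‖b‖ ^ 2 + ε * (2 * i) + ε ^ 2 * ‖c‖ ^ 2)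
      (2 * i) 0 := by
    have h1 : HasDerivAt (fun ε : ℝ => ε * (2 * i)) (2 * i) 0 := by
      simpa using (hasDerivAt_id (0:ℝ)).mul_const (2 * i)
    have h2 : HasDerivAt (fun ε : ℝ => ε ^ 2 * ‖c‖ ^ 2) 0 0 := by
      simpa using (hasDerivAt_pow 2 (0:ℝ)).mul_const (‖c‖ ^ 2)
    exact (((hasDerivAt_const (0:ℝ) (‖b‖ ^ 2)).add h1).add h2).congr_deriv (by ring)
  have houter1 : HasDerivAt (fun x : ℝ => x ^ (α / 2))
      ((α / 2) * (‖b‖ ^ 2) ^ (α / 2 - 1)) (‖b‖ ^ 2) :=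
    Real.hasDerivAt_rpow_const (Or.inr (by linarith))
  have hg1 : HasDerivAt
      (fun ε : ℝ => (1 / α) * (‖b‖ ^ 2 + ε * (2 * i) + ε ^ 2 * ‖c‖ ^ 2) ^ (α / 2))
      ((1 / α) * ((α / 2) * (‖b‖ ^ 2) ^ (α / 2 - 1) * (2 * i))) 0 := by
    have houter1' : HasDerivAt (fun x : ℝ => x ^ (α / 2)) (α / 2 * (‖b‖ ^ 2) ^ (α / 2 - 1))
        ((fun ε : ℝ => ‖b‖ ^ 2 + ε * (2 * i) + ε ^ 2 * ‖c‖ ^ 2) 0) := by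
      simpa using houter1
    have := HasDerivAt.comp (0:ℝ) houter1' hinner1
    simpa [Function.comp, mul_assoc] using this.const_mul (1 / α)
  have hinner2 : HasDerivAt (fun ε : ℝ => Jt + ε * δ) δ 0 := by
    exact ((hasDerivAt_const (0:ℝ) Jt).add ((hasDerivAt_id (0:ℝ)).mul_const δ)).congr_deriv (by ring)
  have houter2 : HasDerivAt (fun x : ℝ => x ^ β) (β * Jt ^ (β - 1)) Jt :=
    Real.hasDerivAt_rpow_const (Or.inr hβ)
  have hg2 : HasDerivAt (fun ε : ℝ => (t / β) * (Jt + ε * δ) ^ β)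
      ((t / β) * (β * Jt ^ (β - 1) * δ)) 0 := by
    have houter2' : HasDerivAt (fun x : ℝ => x ^ β) (β * Jt ^ (β - 1))
        ((fun ε : ℝ => Jt + ε * δ) 0) := by simpa using houter2
    have := HasDerivAt.comp (0:ℝ) houter2' hinner2
    simpa [Function.comp, mul_assoc] using this.const_mul (t / β)
  have hgD : HasDerivAt g
      ((1 / α) * ((α / 2) * (‖b‖ ^ 2) ^ (α / 2 - 1) * (2 * i))
        + (t / β) * (β * Jt ^ (β - 1) * δ)) 0 := hg1.add hg2
  have hg0 : g 0 = (En A J f t α β u).toReal := by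
    rw [en_toReal A J f ht.le hα0 hβ hu, hg]
    simp only [zero_mul, zero_pow, add_zero, mul_zero, ne_eq, OfNat.ofNat_ne_zero,
      not_false_iff]
    rw [sq_rpow_half' _ _ _ (norm_nonneg b) (by ring)]
  have hge : ∀ ε ∈ Set.Ioo (0:ℝ) 1, g 0 ≤ g ε := by
    intro ε hε
    set uε : X := (1 - ε) • u + ε • v with huε
    have hcvx := hconv u v (1 - ε) ε (by linarith [hε.2]) hε.1.le (by ring)
    have hfin : ENNReal.ofReal (1 - ε) * J u + ENNReal.ofReal ε * J v ≠ ⊤ := by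
      simp [ENNReal.add_ne_top, ENNReal.mul_ne_top, hu, hv]
    have hJuε : J uε ≠ ⊤ := ne_top_of_le_ne_top hfin hcvx
    have hJuεr : (J uε).toReal ≤ Jt + ε * δ := by
      have h1 := ENNReal.toReal_mono hfin hcvx
      rw [ENNReal.toReal_add (ENNReal.mul_ne_top (by simp) hu)
          (ENNReal.mul_ne_top (by simp) hv), ENNReal.toReal_mul, ENNReal.toReal_mul,
        ENNReal.toReal_ofReal (by linarith [hε.2]), ENNReal.toReal_ofReal hε.1.le] at h1
      rw [hδ]; rw [hJt, hJv] at *; linarith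
    have hAuε : A uε - f = b + ε • c := by
      rw [huε, hb, hc]
      simp only [map_add, map_smul]
      module
    have hnorm : ‖A uε - f‖ ^ 2 = ‖b‖ ^ 2 + ε * (2 * i) + ε ^ 2 * ‖c‖ ^ 2 := by
      rw [hAuε, @norm_add_sq_real, real_inner_smul_right, norm_smul]
      simp [hi, sq_abs, mul_pow]
      ring
    have hEuε : (En A J f t α β uε).toReal ≤ g ε := by
      rw [en_toReal A J f ht.le hα0 hβ hJuε, hg]
      have e1 : ‖A uε - f‖ ^ α = (‖b‖ ^ 2 + ε * (2 * i) + ε ^ 2 * ‖c‖ ^ 2) ^ (α / 2) := by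
        rw [← hnorm, sq_rpow_half' _ _ _ (norm_nonneg _) (by ring)]
      rw [e1]
      have h2 : (J uε).toReal ^ β ≤ (Jt + ε * δ) ^ β :=
        Real.rpow_le_rpow ENNReal.toReal_nonneg hJuεr hβ0.le
      have h3 : 0 ≤ t / β := div_nonneg ht.le hβ0.le
      nlinarith [mul_le_mul_of_nonneg_left h2 h3]
    calc g 0 = (En A J f t α β u).toReal := hg0
      _ ≤ (En A J f t α β uε).toReal :=
        ENNReal.toReal_mono (en_ne_top A J f ht.le hβ hJuε) (hmin uε)
      _ ≤ g ε := hEuε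
  have hD : 0 ≤ (1 / α) * ((α / 2) * (‖b‖ ^ 2) ^ (α / 2 - 1) * (2 * i))
      + (t / β) * (β * Jt ^ (β - 1) * δ) := by
    have hslope := hasDerivAt_iff_tendsto_slope.1 hgD
    have hslope' : Filter.Tendsto (slope g 0) (nhdsWithin 0 (Set.Ioi 0)) (nhds _) :=
      hslope.mono_left (nhdsWithin_mono _ (fun x hx => ne_of_gt hx))
    refine ge_of_tendsto hslope' ?_
    filter_upwards [Ioo_mem_nhdsGT_of_mem (⟨le_refl 0, zero_lt_one⟩ : (0:ℝ) ∈ Set.Ico 0 1)]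
      with ε hε
    rw [slope_def_field]
    have h1 := hge ε hε
    apply div_nonneg (by linarith) (by linarith [hε.1])
  have e1 : (‖b‖ ^ 2) ^ (α / 2 - 1) = ‖b‖ ^ (α - 2) :=
    sq_rpow_half' _ _ _ (norm_nonneg b) (by ring)
  rw [e1] at hD
  have e2 : (1 / α) * ((α / 2) * ‖b‖ ^ (α - 2) * (2 * i)) = ‖b‖ ^ (α - 2) * i := by
    field_simp
  have e3 : (t / β) * (β * Jt ^ (β - 1) * δ) = t * Jt ^ (β - 1) * δ := by
    field_simp
  rw [e2, e3] at hD
  exact hD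

lemma res_bound (hconv : EConvexFn J) {t α β : ℝ} (ht : 0 < t) (hα : 2 ≤ α) (hβ : 1 ≤ β)
    {u v : X} (hmin : IsMinimizer A J f t α β u) (hu : J u ≠ ⊤) (hv : J v ≠ ⊤)
    (hAv : A v = f) :
    ‖A u - f‖ ^ α ≤ t * (J u).toReal ^ (β - 1) * ((J v).toReal - (J u).toReal) := by
  have EL := euler_lagrange A J f hconv ht hα hβ hmin hu hv
  have h1 : A v - A u = -(A u - f) := by rw [hAv]; abel
  rw [h1, inner_neg_right, real_inner_self_eq_norm_sq] at EL
  have h2 : ‖A u - f‖ ^ (α - 2) * ‖A u - f‖ ^ (2:ℕ) = ‖A u - f‖ ^ α :=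
    rpow_sub_two_mul_sq (norm_nonneg _) (by linarith : (0:ℝ) < α)
  linarith [EL, h2]

lemma J_mono_res {t α β : ℝ} (ht : 0 < t) (hα : 0 < α) (hβ : 1 ≤ β)
    {u v : X} (hmin : IsMinimizer A J f t α β u) (hu : J u ≠ ⊤) (hv : J v ≠ ⊤)
    (hAv : A v = f) : (J u).toReal ≤ (J v).toReal := by
  have hβ0 : (0:ℝ) < β := by linarith
  have cmp := en_cmp A J f ht.le hα hβ hmin hu hv
  rw [hAv] at cmp
  simp only [sub_self, norm_zero] at cmp
  rw [Real.zero_rpow hα.ne'] at cmp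
  have h1 : 0 ≤ (1 / α) * ‖A u - f‖ ^ α :=
    mul_nonneg (by positivity) (Real.rpow_nonneg (norm_nonneg _) _)
  have htβ : (0:ℝ) < t / β := div_pos ht hβ0
  have h2 : (J u).toReal ^ β ≤ (J v).toReal ^ β := by
    have := mul_le_mul_of_nonneg_left (le_refl ((J v).toReal ^ β)) htβ.le
    nlinarith [cmp, h1, htβ]
  by_contra hc
  push_neg at hc
  exact absurd h2 (not_le.2 (Real.rpow_lt_rpow ENNReal.toReal_nonneg hc hβ0))

end EnLemmas
end LipAux

open LipAux

set_option maxHeartbeats 2000000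

/-- Lipschitz estimates, Lemma 3.4.
Let `α ≥ 2`, `β ≥ 1`, `0 < s < t`, and let `u_s`, `u_t` be minimizers of
`E_s^{α,β}(·;f)` and `E_t^{α,β}(·;f)`. Then
`‖Au_t − Au_s‖ ≤ ((t−s)/t)‖Au_t − f‖ ≤ ((t−s)/t)‖f‖`; under the range condition the
estimate improves to `C_R (t−s)/t^{(α−1)/α}` with `C_R = J_min^{β/α}`, and if also the
source condition holds to `C_S (t−s)/t^{(α−2)/(α−1)}` with
`C_S = s_*^{1/(α−1)} J_min^{(β−1)/(α−1)}`. -/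
theorem lipschitz_estimates_forward_path
    {Y : Type*} [NormedAddCommGroup Y] [NormedSpace ℝ Y]
    {H : Type*} [NormedAddCommGroup H] [InnerProductSpace ℝ H]
    (A : (Y →L[ℝ] ℝ) →L[ℝ] H) (J : (Y →L[ℝ] ℝ) → ℝ≥0∞) (f : H)
    (hproper : IsProperFn J) (hconv : EConvexFn J) (hlsc : WeakStarLSC J) (hhom : AbsOneHom J)
    (hdata : ∀ w, A w = f → J w ≠ 0)
    (α β : ℝ) (hα : 2 ≤ α) (hβ : 1 ≤ β)
    (s t : ℝ) (hs : 0 < s) (hst : s < t)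
    (us ut : Y →L[ℝ] ℝ)
    (hus : IsMinimizer A J f s α β us) (hut : IsMinimizer A J f t α β ut) :
    ‖A ut - A us‖ ≤ (t - s) / t * ‖A ut - f‖ ∧
    (t - s) / t * ‖A ut - f‖ ≤ (t - s) / t * ‖f‖ ∧
    (∀ udag : Y →L[ℝ] ℝ, J udag ≠ ⊤ → A udag = f → (∀ w, A w = f → J udag ≤ J w) →
      ‖A ut - A us‖ ≤ (J udag).toReal ^ (β / α) * (t - s) / t ^ ((α - 1) / α)) ∧
    (∀ udag : Y →L[ℝ] ℝ, J udag ≠ ⊤ → A udag = f → (∀ w, A w = f → J udag ≤ J w) →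
      (∃ q : H, Astar A q ∈ subdiff J udag) →
      ‖A ut - A us‖ ≤ sInf (SourceNorms A J f) ^ (1 / (α - 1)) *
        (J udag).toReal ^ ((β - 1) / (α - 1)) * (t - s) / t ^ ((α - 2) / (α - 1))) := by
  have ht : 0 < t := hs.trans hst
  have hα0 : (0:ℝ) < α := by linarith
  have hβ0 : (0:ℝ) < β := by linarith
  have hts0 : (0:ℝ) ≤ (t - s) / t := div_nonneg (by linarith) ht.le
  have hJut : J ut ≠ ⊤ := min_ne_top A J f ht hβ hproper hut
  have hJus : J us ≠ ⊤ := min_ne_top A J f hs hβ hproper hus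
  have cmp1 := en_cmp A J f ht.le hα0 hβ hut hJut hJus
  have cmp2 := en_cmp A J f hs.le hα0 hβ hus hJus hJut
  -- J ut ≤ J us (real)
  have hJts : (J ut).toReal ≤ (J us).toReal := by
    by_contra hc
    push_neg at hc
    have h1 : (J us).toReal ^ β < (J ut).toReal ^ β :=
      Real.rpow_lt_rpow ENNReal.toReal_nonneg hc hβ0
    have h2 : 0 < (t - s) / β := div_pos (by linarith) hβ0
    have h3 := mul_pos h2 (sub_pos.2 h1)
    ring_nf at cmp1 cmp2 h3
    linarith [cmp1, cmp2, h3]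
  -- residual monotone
  have hab : ‖A us - f‖ ≤ ‖A ut - f‖ := by
    by_contra hc
    push_neg at hc
    have h1 : ‖A ut - f‖ ^ α < ‖A us - f‖ ^ α :=
      Real.rpow_lt_rpow (norm_nonneg _) hc hα0
    have h2 : (J ut).toReal ^ β ≤ (J us).toReal ^ β :=
      Real.rpow_le_rpow ENNReal.toReal_nonneg hJts hβ0.le
    have h3 : (0:ℝ) < 1 / α := by positivity
    have h4 : (0:ℝ) ≤ s / β := div_nonneg hs.le hβ0.le
    linarith [cmp2, mul_le_mul_of_nonneg_left h2 h4, mul_lt_mul_of_pos_left h1 h3]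
  -- Euler-Lagrange relations
  have EL1 := euler_lagrange A J f hconv ht hα hβ hut hJut hJus
  have EL2 := euler_lagrange A J f hconv hs hα hβ hus hJus hJut
  have hd1 : A us - A ut = -((A ut - f) - (A us - f)) := by abel
  have hd2 : A ut - A us = (A ut - f) - (A us - f) := by abel
  rw [hd1, inner_neg_right] at EL1
  rw [hd2] at EL2
  -- key relation
  have hkey : s * (‖A ut - f‖ ^ (α - 2) * ⟪A ut - f, (A ut - f) - (A us - f)⟫)
      ≤ t * (‖A us - f‖ ^ (α - 2) * ⟪A us - f, (A ut - f) - (A us - f)⟫) := by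
    have h5 : (J ut).toReal ^ (β - 1) ≤ (J us).toReal ^ (β - 1) :=
      Real.rpow_le_rpow ENNReal.toReal_nonneg hJts (by linarith)
    have h6 : (J ut).toReal ^ (β - 1) * ((J us).toReal - (J ut).toReal)
        ≤ (J us).toReal ^ (β - 1) * ((J us).toReal - (J ut).toReal) :=
      mul_le_mul_of_nonneg_right h5 (sub_nonneg.2 hJts)
    -- from EL1: ‖b‖^p * ⟪b,d⟫ ≤ t * Jt^{β-1} * (Js - Jt)
    -- from EL2: s * Js^{β-1} * (Js - Jt) ≤ ‖a‖^p * ⟪a,d⟫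
    have k1 : ‖A ut - f‖ ^ (α - 2) * ⟪A ut - f, (A ut - f) - (A us - f)⟫
        ≤ t * ((J ut).toReal ^ (β - 1) * ((J us).toReal - (J ut).toReal)) := by
      linarith [EL1]
    have k2 : s * ((J us).toReal ^ (β - 1) * ((J us).toReal - (J ut).toReal))
        ≤ ‖A us - f‖ ^ (α - 2) * ⟪A us - f, (A ut - f) - (A us - f)⟫ := by
      linarith [EL2]
    have k3 := mul_le_mul_of_nonneg_left k1 hs.le
    have k4 := mul_le_mul_of_nonneg_left k2 ht.le
    have k5 := mul_le_mul_of_nonneg_left h6 (mul_nonneg hs.le ht.le)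
    nlinarith [k3, k4, k5]
  have part1 : ‖A ut - A us‖ ≤ (t - s) / t * ‖A ut - f‖ := by
    rw [hd2]
    exact key_ineq (A us - f) (A ut - f) hs hst (by linarith) hab hkey
  -- part 2
  have hJ0 : J (0 : Y →L[ℝ] ℝ) = 0 := by
    have := hhom 0 0
    simpa using this
  have part2pre : ‖A ut - f‖ ≤ ‖f‖ := by
    have cmp := en_cmp A J f ht.le hα0 hβ hut hJut (v := 0) (by simp [hJ0])
    rw [hJ0] at cmp
    simp only [map_zero, zero_sub, norm_neg, ENNReal.toReal_zero] at cmp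
    rw [Real.zero_rpow hβ0.ne'] at cmp
    by_contra hc
    push_neg at hc
    have h1 : ‖f‖ ^ α < ‖A ut - f‖ ^ α := Real.rpow_lt_rpow (norm_nonneg _) hc hα0
    have h3 : (0:ℝ) < 1 / α := by positivity
    have h4 : (0:ℝ) ≤ (t / β) * (J ut).toReal ^ β :=
      mul_nonneg (div_nonneg ht.le hβ0.le) (Real.rpow_nonneg ENNReal.toReal_nonneg _)
    linarith [mul_lt_mul_of_pos_left h1 h3]
  refine ⟨part1, mul_le_mul_of_nonneg_left part2pre hts0, ?_, ?_⟩
  · -- range condition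
    intro udag hJd hAd _hmin'
    have hJm : 0 < (J udag).toReal := ENNReal.toReal_pos (hdata udag hAd) hJd
    have h1 := res_bound A J f hconv ht hα hβ hut hJut hJd hAd
    have h2 : (J ut).toReal ≤ (J udag).toReal :=
      J_mono_res A J f ht hα0 hβ hut hJut hJd hAd
    have h3 : ‖A ut - f‖ ^ α ≤ t * (J udag).toReal ^ β := by
      have e5 : (J ut).toReal ^ (β - 1) ≤ (J udag).toReal ^ (β - 1) :=
        Real.rpow_le_rpow ENNReal.toReal_nonneg h2 (by linarith)
      have e6 : (J ut).toReal ^ (β - 1) * ((J udag).toReal - (J ut).toReal)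
          ≤ (J udag).toReal ^ (β - 1) * (J udag).toReal :=
        mul_le_mul e5 (by linarith [ENNReal.toReal_nonneg (a := J ut)])
          (by linarith) (Real.rpow_nonneg ENNReal.toReal_nonneg _)
      have e7 : (J udag).toReal ^ (β - 1) * (J udag).toReal = (J udag).toReal ^ β :=
        rpow_sub_one_mul hJm β
      have e8 := mul_le_mul_of_nonneg_left e6 ht.le
      rw [e7] at e8
      calc ‖A ut - f‖ ^ α
          ≤ t * ((J ut).toReal ^ (β - 1) * ((J udag).toReal - (J ut).toReal)) := by
            rw [← mul_assoc]; exact h1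
        _ ≤ t * (J udag).toReal ^ β := e8
    have h4 : ‖A ut - f‖ ≤ t ^ α⁻¹ * (J udag).toReal ^ (β / α) := by
      calc ‖A ut - f‖ = (‖A ut - f‖ ^ α) ^ α⁻¹ :=
            (Real.rpow_rpow_inv (norm_nonneg _) hα0.ne').symm
        _ ≤ (t * (J udag).toReal ^ β) ^ α⁻¹ :=
            Real.rpow_le_rpow (Real.rpow_nonneg (norm_nonneg _) _) h3
              (inv_nonneg.2 hα0.le)
        _ = t ^ α⁻¹ * ((J udag).toReal ^ β) ^ α⁻¹ :=
            Real.mul_rpow ht.le (Real.rpow_nonneg ENNReal.toReal_nonneg _)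
        _ = t ^ α⁻¹ * (J udag).toReal ^ (β / α) := by
            rw [← Real.rpow_mul ENNReal.toReal_nonneg, div_eq_mul_inv]
    calc ‖A ut - A us‖ ≤ (t - s) / t * ‖A ut - f‖ := part1
      _ ≤ (t - s) / t * (t ^ α⁻¹ * (J udag).toReal ^ (β / α)) :=
          mul_le_mul_of_nonneg_left h4 hts0
      _ = (J udag).toReal ^ (β / α) * ((t - s) / t * t ^ α⁻¹) := by ring
      _ = (J udag).toReal ^ (β / α) * ((t - s) / t ^ ((α - 1) / α)) := by
          rw [tfact (p := α⁻¹) (q := (α - 1) / α) s ht (by field_simp; ring)]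
      _ = (J udag).toReal ^ (β / α) * (t - s) / t ^ ((α - 1) / α) := by ring
  · -- source condition
    intro udag hJd hAd hmin' ⟨q0, hq0⟩
    have hJm : 0 < (J udag).toReal := ENNReal.toReal_pos (hdata udag hAd) hJd
    have hSne : (SourceNorms A J f).Nonempty := ⟨‖q0‖, udag, q0, hJd, hAd, hq0, rfl⟩
    have hSnn : ∀ r ∈ SourceNorms A J f, (0:ℝ) ≤ r := by
      rintro r ⟨u, q, -, -, -, rfl⟩
      exact norm_nonneg q
    have hsInf0 : 0 ≤ sInf (SourceNorms A J f) := Real.sInf_nonneg hSnn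
    have hα1 : (0:ℝ) < α - 1 := by linarith
    have hJtnn : (0:ℝ) ≤ (J ut).toReal := ENNReal.toReal_nonneg
    rcases eq_or_lt_of_le (norm_nonneg (A ut - f)) with hb0 | hb0
    · -- Aut = f case
      have hR : 0 ≤ sInf (SourceNorms A J f) ^ (1 / (α - 1)) *
          (J udag).toReal ^ ((β - 1) / (α - 1)) * (t - s) / t ^ ((α - 2) / (α - 1)) := by
        apply div_nonneg
        · exact mul_nonneg (mul_nonneg (Real.rpow_nonneg hsInf0 _)
            (Real.rpow_nonneg ENNReal.toReal_nonneg _)) (by linarith)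
        · exact (Real.rpow_pos_of_pos ht _).le
      have : ‖A ut - A us‖ ≤ 0 := by
        calc ‖A ut - A us‖ ≤ (t - s) / t * ‖A ut - f‖ := part1
          _ = 0 := by rw [← hb0, mul_zero]
      linarith
    · -- per-witness bound
      have hr : ∀ r ∈ SourceNorms A J f,
          ‖A ut - f‖ ^ (α - 1) ≤ t * (J udag).toReal ^ (β - 1) * r := by
        rintro r ⟨u, q, hJu, hAu, hq, rfl⟩
        -- J u = J udag
        have hle : J u ≤ J udag := by
          have h1 := hq udag
          have h2 : A (udag - u) = 0 := by rw [map_sub, hAd, hAu, sub_self]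
          have h3 : (Astar A q) (udag - u) = 0 := by
            simp [Astar, h2]
          rw [h3] at h1
          simp only [EReal.coe_zero, add_zero] at h1
          exact EReal.coe_ennreal_le_coe_ennreal_iff.1 h1
        have hJuv : J u = J udag := le_antisymm hle (hmin' u hAu)
        have res := res_bound A J f hconv ht hα hβ hut hJut hJu hAu
        have hJtu : (J ut).toReal ≤ (J u).toReal :=
          J_mono_res A J f ht hα0 hβ hut hJut hJu hAu
        rw [hJuv] at res hJtu
        -- subgradient inequality at ut
        have hsub : (J udag).toReal + ⟪q, A ut - f⟫ ≤ (J ut).toReal := by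
          have h1 := hq ut
          have h2 : A (ut - u) = A ut - f := by rw [map_sub, hAu]
          have h3 : ((Astar A q) (ut - u) : ℝ) = ⟪q, A ut - f⟫ := by
            simp [Astar, h2]
          rw [h3, ← ereal_coe_toReal hJu, ← ereal_coe_toReal hJut, hJuv,
            ← EReal.coe_add] at h1
          exact_mod_cast h1
        have hqb : (J udag).toReal - (J ut).toReal ≤ ‖q‖ * ‖A ut - f‖ := by
          have h1 := abs_real_inner_le_norm q (A ut - f)
          rw [abs_le] at h1
          linarith [h1.1, hsub]
        have e5 : (J ut).toReal ^ (β - 1) ≤ (J udag).toReal ^ (β - 1) :=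
          Real.rpow_le_rpow ENNReal.toReal_nonneg hJtu (by linarith)
        have e6 : (J ut).toReal ^ (β - 1) * ((J udag).toReal - (J ut).toReal)
            ≤ (J udag).toReal ^ (β - 1) * (‖q‖ * ‖A ut - f‖) :=
          mul_le_mul e5 hqb (sub_nonneg.2 hJtu) (Real.rpow_nonneg ENNReal.toReal_nonneg _)
        have e8 := mul_le_mul_of_nonneg_left e6 ht.le
        have e9 : ‖A ut - f‖ ^ (α - 1) * ‖A ut - f‖ = ‖A ut - f‖ ^ α :=
          rpow_sub_one_mul hb0 α
        have e10 : ‖A ut - f‖ ^ (α - 1) * ‖A ut - f‖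
            ≤ (t * (J udag).toReal ^ (β - 1) * ‖q‖) * ‖A ut - f‖ := by
          rw [e9]
          calc ‖A ut - f‖ ^ α
              ≤ t * ((J ut).toReal ^ (β - 1) * ((J udag).toReal - (J ut).toReal)) := by
                rw [← mul_assoc]; exact res
            _ ≤ t * ((J udag).toReal ^ (β - 1) * (‖q‖ * ‖A ut - f‖)) := e8
            _ = (t * (J udag).toReal ^ (β - 1) * ‖q‖) * ‖A ut - f‖ := by ring
        exact le_of_mul_le_mul_right e10 hb0
      have hJmp : (0:ℝ) < t * (J udag).toReal ^ (β - 1) :=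
        mul_pos ht (Real.rpow_pos_of_pos hJm _)
      have hinf : ‖A ut - f‖ ^ (α - 1)
          ≤ t * (J udag).toReal ^ (β - 1) * sInf (SourceNorms A J f) := by
        have h8 : ∀ r ∈ SourceNorms A J f,
            ‖A ut - f‖ ^ (α - 1) / (t * (J udag).toReal ^ (β - 1)) ≤ r := by
          intro r hrS
          rw [div_le_iff₀ hJmp]
          linarith [hr r hrS]
        have h9 := le_csInf hSne h8
        rw [div_le_iff₀ hJmp] at h9
        linarith [h9]
      have h4 : ‖A ut - f‖ ≤ t ^ (α - 1)⁻¹ * (J udag).toReal ^ ((β - 1) / (α - 1)) *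
          sInf (SourceNorms A J f) ^ (1 / (α - 1)) := by
        calc ‖A ut - f‖ = (‖A ut - f‖ ^ (α - 1)) ^ (α - 1)⁻¹ :=
              (Real.rpow_rpow_inv (norm_nonneg _) hα1.ne').symm
          _ ≤ (t * (J udag).toReal ^ (β - 1) * sInf (SourceNorms A J f)) ^ (α - 1)⁻¹ :=
              Real.rpow_le_rpow (Real.rpow_nonneg (norm_nonneg _) _) hinf
                (inv_nonneg.2 hα1.le)
          _ = (t * (J udag).toReal ^ (β - 1)) ^ (α - 1)⁻¹ *
              sInf (SourceNorms A J f) ^ (α - 1)⁻¹ :=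
              Real.mul_rpow hJmp.le hsInf0
          _ = t ^ (α - 1)⁻¹ * ((J udag).toReal ^ (β - 1)) ^ (α - 1)⁻¹ *
              sInf (SourceNorms A J f) ^ (α - 1)⁻¹ := by
              rw [Real.mul_rpow ht.le (Real.rpow_nonneg ENNReal.toReal_nonneg _)]
          _ = t ^ (α - 1)⁻¹ * (J udag).toReal ^ ((β - 1) / (α - 1)) *
              sInf (SourceNorms A J f) ^ (1 / (α - 1)) := by
              rw [← Real.rpow_mul ENNReal.toReal_nonneg, div_eq_mul_inv, one_div]
      calc ‖A ut - A us‖ ≤ (t - s) / t * ‖A ut - f‖ := part1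
        _ ≤ (t - s) / t * (t ^ (α - 1)⁻¹ * (J udag).toReal ^ ((β - 1) / (α - 1)) *
            sInf (SourceNorms A J f) ^ (1 / (α - 1))) :=
            mul_le_mul_of_nonneg_left h4 hts0
        _ = sInf (SourceNorms A J f) ^ (1 / (α - 1)) *
            (J udag).toReal ^ ((β - 1) / (α - 1)) * ((t - s) / t * t ^ (α - 1)⁻¹) := by
            ring
        _ = sInf (SourceNorms A J f) ^ (1 / (α - 1)) *
            (J udag).toReal ^ ((β - 1) / (α - 1)) * ((t - s) / t ^ ((α - 2) / (α - 1))) := by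
            rw [tfact (p := (α - 1)⁻¹) (q := (α - 2) / (α - 1)) s ht
              (by have h9 : α - 1 ≠ 0 := by linarith
                  field_simp
                  ring)]
        _ = sInf (SourceNorms A J f) ^ (1 / (α - 1)) *
            (J udag).toReal ^ ((β - 1) / (α - 1)) * (t - s) / t ^ ((α - 2) / (α - 1)) := by
            ring

end
end
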